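/- arXiv:1005.3659 — 7 statements merged into one kernel-verified Lean document; each statement's English description precedes it below -/
import Mathlib

section
/- Let ψ be a branching mechanism with parameters α > 0, β ≥ 0 and Lévy measure ν, assume ψ(λ) → ∞ as λ → ∞, and let λ* > 0 be the unique positive root of ψ. If ∫_{λ*+1}^∞ (∫_{λ*}^ξ ψ(u) du)^{-1/2} dξ < ∞, then ∫_{λ*+1}^∞ ψ(ξ)^{-1} dξ < ∞. -/
open MeasureTheory Real Set Filter


lemma aux_nonneg {t : ℝ} (ht : 0 ≤ t) : 0 ≤ Real.exp (-t) - 1 + t := by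
  have := Real.add_one_le_exp (-t); linarith

lemma aux_le_lin {t : ℝ} (ht : 0 ≤ t) : Real.exp (-t) - 1 + t ≤ t := by
  have : Real.exp (-t) ≤ 1 := Real.exp_le_one_iff.2 (by linarith)
  linarith

lemma aux_le_sq {t : ℝ} (ht : 0 ≤ t) (ht1 : t ≤ 1) : Real.exp (-t) - 1 + t ≤ t ^ 2 := by
  have h := Real.abs_exp_sub_one_sub_id_le (x := -t) (by rw [abs_neg, abs_of_nonneg ht]; exact ht1)
  rw [neg_sq] at h
  have := abs_le.1 h
  have : Real.exp (-t) - 1 - (-t) ≤ t ^ 2 := this.2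
  linarith

lemma aux_bound {l x : ℝ} (hl : 0 ≤ l) (hx : 0 ≤ x) :
    Real.exp (-l * x) - 1 + l * x ≤ max l (l ^ 2) * min x (x ^ 2) := by
  have ht : 0 ≤ l * x := mul_nonneg hl hx
  have hml : l ≤ max l (l ^ 2) := le_max_left _ _
  have hml2 : l ^ 2 ≤ max l (l ^ 2) := le_max_right _ _
  rcases le_total x 1 with hx1 | hx1
  · have hmin : min x (x ^ 2) = x ^ 2 := min_eq_right (by nlinarith)
    rw [hmin]
    rcases le_total (l * x) 1 with ht1 | ht1
    · have := aux_le_sq ht ht1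
      rw [neg_mul] at *
      calc Real.exp (-(l*x)) - 1 + l*x ≤ (l*x)^2 := this
        _ = l^2 * x^2 := by ring
        _ ≤ max l (l^2) * x^2 := by nlinarith [sq_nonneg x]
    · have h1 := aux_le_lin ht
      rw [neg_mul] at *
      calc Real.exp (-(l*x)) - 1 + l*x ≤ l*x := h1
        _ ≤ l^2 * x^2 := by nlinarith
        _ ≤ max l (l^2) * x^2 := by nlinarith [sq_nonneg x]
  · have hmin : min x (x ^ 2) = x := min_eq_left (by nlinarith)
    rw [hmin, neg_mul]
    calc Real.exp (-(l*x)) - 1 + l*x ≤ l*x := aux_le_lin ht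
      _ ≤ max l (l^2) * x := by nlinarith


lemma aux_integrable (ν : Measure ℝ) (hν0 : ν (Set.Iic 0) = 0)
    (hν : ∫⁻ x, ENNReal.ofReal (min x (x ^ 2)) ∂ν ≠ ⊤)
    {l : ℝ} (hl : 0 ≤ l) :
    Integrable (fun x => Real.exp (-l * x) - 1 + l * x) ν := by
  have hae : ∀ᵐ x ∂ν, 0 < x := by
    rw [ae_iff]
    simp only [not_lt]
    exact hν0
  constructor
  · exact (by fun_prop : Continuous fun x => Real.exp (-l * x) - 1 + l * x).aestronglyMeasurable
  · rw [hasFiniteIntegral_iff_norm]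
    have hb : ∀ᵐ x ∂ν, ENNReal.ofReal ‖Real.exp (-l * x) - 1 + l * x‖ ≤
        ENNReal.ofReal (max l (l ^ 2)) * ENNReal.ofReal (min x (x ^ 2)) := by
      filter_upwards [hae] with x hx
      rw [← ENNReal.ofReal_mul (le_max_of_le_left hl)]
      apply ENNReal.ofReal_le_ofReal
      have h0 : 0 ≤ Real.exp (-l * x) - 1 + l * x := by rw [neg_mul]; exact aux_nonneg (mul_nonneg hl hx.le)
      rw [Real.norm_eq_abs, abs_of_nonneg h0]
      exact aux_bound hl hx.le
    calc ∫⁻ x, ENNReal.ofReal ‖Real.exp (-l * x) - 1 + l * x‖ ∂ν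
        ≤ ∫⁻ x, ENNReal.ofReal (max l (l ^ 2)) * ENNReal.ofReal (min x (x ^ 2)) ∂ν :=
          lintegral_mono_ae hb
      _ = ENNReal.ofReal (max l (l ^ 2)) * ∫⁻ x, ENNReal.ofReal (min x (x ^ 2)) ∂ν :=
          lintegral_const_mul' _ _ ENNReal.ofReal_ne_top
      _ < ⊤ := ENNReal.mul_lt_top ENNReal.ofReal_lt_top hν.lt_top

lemma aux_cvx_integrand {x : ℝ} (hx : 0 ≤ x) :
    ConvexOn ℝ (Set.Ici (0:ℝ)) (fun l => Real.exp (-l * x) - 1 + l * x) := by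
  refine ⟨convex_Ici 0, fun p _ q _ t u ht hu htu => ?_⟩
  simp only [smul_eq_mul]
  have h := convexOn_exp.2 (Set.mem_univ (-p * x)) (Set.mem_univ (-q * x)) ht hu htu
  simp only [smul_eq_mul] at h
  have he : -(t * p + u * q) * x = t * (-p * x) + u * (-q * x) := by ring
  rw [he]
  nlinarith [h]

lemma aux_cvx_psi (α β : ℝ) (hβ : 0 ≤ β)
    (ν : Measure ℝ) (hν0 : ν (Set.Iic 0) = 0)
    (hν : ∫⁻ x, ENNReal.ofReal (min x (x ^ 2)) ∂ν ≠ ⊤)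
    (ψ : ℝ → ℝ)
    (hψ : ∀ l : ℝ, ψ l = -α * l + β * l ^ 2 + ∫ x, (Real.exp (-l * x) - 1 + l * x) ∂ν) :
    ConvexOn ℝ (Set.Ici (0:ℝ)) ψ := by
  have hae : ∀ᵐ x ∂ν, 0 < x := by
    rw [ae_iff]; simp only [not_lt]; exact hν0
  have hI : ConvexOn ℝ (Set.Ici (0:ℝ))
      (fun l => ∫ x, (Real.exp (-l * x) - 1 + l * x) ∂ν) := by
    refine ⟨convex_Ici 0, fun p hp q hq t u ht hu htu => ?_⟩
    have hp' : (0:ℝ) ≤ p := hp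
    have hq' : (0:ℝ) ≤ q := hq
    have hc : 0 ≤ t * p + u * q := by positivity
    simp only [smul_eq_mul]
    have hint1 := aux_integrable ν hν0 hν hp'
    have hint2 := aux_integrable ν hν0 hν hq'
    have hintc := aux_integrable ν hν0 hν hc
    calc ∫ x, (Real.exp (-(t * p + u * q) * x) - 1 + (t * p + u * q) * x) ∂ν
        ≤ ∫ x, (t * (Real.exp (-p * x) - 1 + p * x) + u * (Real.exp (-q * x) - 1 + q * x)) ∂ν := by
          refine integral_mono_ae hintc ((hint1.const_mul t).add (hint2.const_mul u)) ?_
          filter_upwards [hae] with x hx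
          have h := (aux_cvx_integrand hx.le).2 hp hq ht hu htu
          simpa [smul_eq_mul] using h
      _ = t * ∫ x, (Real.exp (-p * x) - 1 + p * x) ∂ν
          + u * ∫ x, (Real.exp (-q * x) - 1 + q * x) ∂ν := by
          rw [integral_add (hint1.const_mul t) (hint2.const_mul u),
            integral_const_mul, integral_const_mul]
  have hquad : ConvexOn ℝ (Set.Ici (0:ℝ)) (fun l => -α * l + β * l ^ 2) := by
    refine ⟨convex_Ici 0, fun p _ q _ t u ht hu htu => ?_⟩
    simp only [smul_eq_mul]
    have hu' : u = 1 - t := by linarith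
    have key : t * (-α * p + β * p ^ 2) + u * (-α * q + β * q ^ 2)
        - (-α * (t * p + u * q) + β * (t * p + u * q) ^ 2) = β * (t * u * (p - q) ^ 2) := by
      rw [hu']; ring
    have h0 : 0 ≤ β * (t * u * (p - q) ^ 2) :=
      mul_nonneg hβ (mul_nonneg (mul_nonneg ht hu) (sq_nonneg (p - q)))
    linarith
  have : ψ = fun l => (-α * l + β * l ^ 2) + ∫ x, (Real.exp (-l * x) - 1 + l * x) ∂ν := by
    funext l; rw [hψ l]
  rw [this]
  exact hquad.add hI

lemma aux_mono (ψ : ℝ → ℝ) (lstar : ℝ) (hl0 : 0 < lstar)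
    (hconv : ConvexOn ℝ (Set.Ici (0:ℝ)) ψ)
    (hroot : ψ lstar = 0) (huniq : ∀ l : ℝ, lstar < l → 0 < ψ l) :
    MonotoneOn ψ (Set.Ici lstar) := by
  intro p hp q hq hpq
  have hp' : lstar ≤ p := hp
  have hq' : lstar ≤ q := hq
  rcases eq_or_lt_of_le hp' with rfl | hpl
  · rw [hroot]
    rcases eq_or_lt_of_le hq' with rfl | hql
    · rw [hroot]
    · exact (huniq q hql).le
  · rcases eq_or_lt_of_le hpq with rfl | hpq'
    · exact le_refl _
    · have hsec := hconv.secant_mono (a := lstar) (x := p) (y := q)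
        (le_of_lt hl0) (by exact le_trans hl0.le hp' : (0:ℝ) ≤ p) (le_trans hl0.le hq')
        (ne_of_gt hpl) (ne_of_gt (lt_trans hpl hpq')) hpq
      rw [hroot, sub_zero, sub_zero] at hsec
      have h1 : 0 < p - lstar := by linarith
      have h2 : 0 < q - lstar := by linarith
      rw [div_le_div_iff₀ h1 h2] at hsec
      have hψp : 0 < ψ p := huniq p hpl
      nlinarith

/-- For a branching mechanism `ψ` with `ψ(λ) → ∞` and unique positive
root `λ*`, condition (A3) `∫^∞ (∫_{λ*}^ξ ψ(u) du)^{-1/2} dξ < ∞` implies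
`∫^∞ ψ(ξ)⁻¹ dξ < ∞`. -/
theorem A3_implies_inverse_psi_integrable
    (α β : ℝ) (hα : 0 < α) (hβ : 0 ≤ β)
    (ν : Measure ℝ) (hν0 : ν (Set.Iic 0) = 0)
    (hν : ∫⁻ x, ENNReal.ofReal (min x (x ^ 2)) ∂ν ≠ ⊤)
    (ψ : ℝ → ℝ)
    (hψ : ∀ l : ℝ, ψ l = -α * l + β * l ^ 2 + ∫ x, (Real.exp (-l * x) - 1 + l * x) ∂ν)
    (hψ_top : Tendsto ψ atTop atTop)
    (lstar : ℝ) (hlstar_pos : 0 < lstar) (hlstar_root : ψ lstar = 0)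
    (hlstar_unique : ∀ l : ℝ, lstar < l → 0 < ψ l)
    (hA3 : ∫⁻ ξ in Set.Ici (lstar + 1),
        ENNReal.ofReal ((Real.sqrt (∫ u in lstar..ξ, ψ u))⁻¹) ≠ ⊤) :
    ∫⁻ ξ in Set.Ici (lstar + 1), ENNReal.ofReal (ψ ξ)⁻¹ ≠ ⊤ := by
  have hconv : ConvexOn ℝ (Set.Ici (0:ℝ)) ψ := aux_cvx_psi α β hβ ν hν0 hν ψ hψ
  have hmono := aux_mono ψ lstar hlstar_pos hconv hlstar_root hlstar_unique
  have hpos : ∀ u, lstar ≤ u → 0 ≤ ψ u := by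
    intro u hu
    rcases eq_or_lt_of_le hu with rfl | hu'
    · exact hlstar_root.ge
    · exact (hlstar_unique u hu').le
  set c := ψ (lstar + 1) with hc_def
  have hc : 0 < c := hlstar_unique _ (by linarith)
  set m := lstar + 1/2 with hm_def
  have hd : 0 < ψ m := hlstar_unique _ (by rw [hm_def]; linarith)
  -- pointwise bound
  have key : ∀ ξ, lstar + 1 ≤ ξ →
      (ψ ξ)⁻¹ ≤ (Real.sqrt c)⁻¹ * (Real.sqrt (∫ u in lstar..ξ, ψ u))⁻¹ := by
    intro ξ hξ
    have hlξ : lstar ≤ ξ := by linarith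
    have hmξ : m ≤ ξ := by rw [hm_def]; linarith
    have hψξ : 0 < ψ ξ := hlstar_unique ξ (by linarith)
    have hii : IntervalIntegrable ψ volume lstar ξ := by
      apply MonotoneOn.intervalIntegrable
      rw [Set.uIcc_of_le hlξ]
      exact hmono.mono (Set.Icc_subset_Ici_self)
    have hii1 : IntervalIntegrable ψ volume lstar m := by
      apply MonotoneOn.intervalIntegrable
      rw [Set.uIcc_of_le (by rw [hm_def]; linarith : lstar ≤ m)]
      exact hmono.mono (Set.Icc_subset_Ici_self)
    have hii2 : IntervalIntegrable ψ volume m ξ := by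
      apply MonotoneOn.intervalIntegrable
      rw [Set.uIcc_of_le hmξ]
      exact hmono.mono (fun u hu => le_trans (by rw [hm_def]; linarith : lstar ≤ m) hu.1)
    set Φ := ∫ u in lstar..ξ, ψ u with hΦ_def
    have hΦ_le : Φ ≤ (ξ - lstar) * ψ ξ := by
      calc Φ ≤ ∫ _u in lstar..ξ, ψ ξ := by
            apply intervalIntegral.integral_mono_on hlξ hii intervalIntegrable_const
            intro u hu
            exact hmono hu.1 hlξ hu.2
        _ = (ξ - lstar) * ψ ξ := by
            rw [intervalIntegral.integral_const, smul_eq_mul]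
    have hΦ_pos : 0 < Φ := by
      have hsplit : (∫ u in lstar..m, ψ u) + (∫ u in m..ξ, ψ u) = Φ :=
        intervalIntegral.integral_add_adjacent_intervals hii1 hii2
      have h1 : 0 ≤ ∫ u in lstar..m, ψ u := by
        apply intervalIntegral.integral_nonneg (by rw [hm_def]; linarith)
        intro u hu
        exact hpos u hu.1
      have h2 : (ξ - m) * ψ m ≤ ∫ u in m..ξ, ψ u := by
        calc (ξ - m) * ψ m = ∫ _u in m..ξ, ψ m := by
              rw [intervalIntegral.integral_const, smul_eq_mul]
          _ ≤ ∫ u in m..ξ, ψ u := by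
              apply intervalIntegral.integral_mono_on hmξ intervalIntegrable_const hii2
              intro u hu
              exact hmono (by rw [hm_def]; linarith : lstar ≤ m) (le_trans (by rw [hm_def]; linarith) hu.1) hu.1
      have h3 : 0 < (ξ - m) * ψ m := by
        apply mul_pos _ hd
        rw [hm_def]; linarith
      linarith
    have hlin : c * (ξ - lstar) ≤ ψ ξ := by
      have hsec := hconv.secant_mono (a := lstar) (x := lstar + 1) (y := ξ)
        hlstar_pos.le (by linarith : (0:ℝ) ≤ lstar + 1) (by linarith : (0:ℝ) ≤ ξ)
        (by intro h; linarith [h ▸ (rfl : lstar + 1 = lstar + 1)]) (by intro h; linarith [h]) hξ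
      rw [hlstar_root, sub_zero, sub_zero, add_sub_cancel_left, div_one] at hsec
      rw [le_div_iff₀ (by linarith : (0:ℝ) < ξ - lstar)] at hsec
      linarith
    have hkey : c * Φ ≤ ψ ξ ^ 2 := by nlinarith
    have h1 : Real.sqrt (c * Φ) ≤ ψ ξ := by
      rw [← Real.sqrt_sq hψξ.le]
      exact Real.sqrt_le_sqrt hkey
    have h2 : 0 < Real.sqrt (c * Φ) := Real.sqrt_pos.2 (by positivity)
    have h3 : (ψ ξ)⁻¹ ≤ (Real.sqrt (c * Φ))⁻¹ := by
      apply inv_anti₀ h2 h1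
    rwa [Real.sqrt_mul hc.le, mul_inv] at h3
  -- lintegral bound
  have hb : ∀ᵐ ξ ∂(volume.restrict (Set.Ici (lstar + 1))),
      ENNReal.ofReal (ψ ξ)⁻¹ ≤ ENNReal.ofReal ((Real.sqrt c)⁻¹) *
        ENNReal.ofReal ((Real.sqrt (∫ u in lstar..ξ, ψ u))⁻¹) := by
    rw [ae_restrict_iff' measurableSet_Ici]
    filter_upwards with ξ hξ
    rw [← ENNReal.ofReal_mul (by positivity)]
    exact ENNReal.ofReal_le_ofReal (key ξ hξ)
  have hcalc : ∫⁻ ξ in Set.Ici (lstar + 1), ENNReal.ofReal (ψ ξ)⁻¹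
      ≤ ENNReal.ofReal ((Real.sqrt c)⁻¹) *
        ∫⁻ ξ in Set.Ici (lstar + 1), ENNReal.ofReal ((Real.sqrt (∫ u in lstar..ξ, ψ u))⁻¹) := by
    rw [← lintegral_const_mul' _ _ ENNReal.ofReal_ne_top]
    exact lintegral_mono_ae hb
  exact ne_of_lt (lt_of_le_of_lt hcalc (ENNReal.mul_lt_top ENNReal.ofReal_lt_top hA3.lt_top))
end

section
/- Let β ≥ 0 and let ν be a measure on (0,∞) with ∫_{(0,∞)} (x ∧ x²) ν(dx) < ∞, and set ψ₀(λ) = βλ² + ∫_{(0,∞)} (e^{-λx} - 1 + λx) ν(dx) for λ ≥ 0. Then ∫_0^1 r^{-2} ψ₀(r) dr < ∞ if and only if ∫_{[1,∞)} x (log x) ν(dx) < ∞. -/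
open MeasureTheory Real Set

open scoped ENNReal

lemma E_nonneg (u : ℝ) : 0 ≤ Real.exp (-u) - 1 + u := by
  have h := Real.add_one_le_exp (-u); linarith

lemma E_ge (u : ℝ) : u - 1 ≤ Real.exp (-u) - 1 + u := by
  have : 0 < Real.exp (-u) := Real.exp_pos _; linarith

lemma E_le_linear {u : ℝ} (hu : 0 ≤ u) : Real.exp (-u) - 1 + u ≤ u := by
  have : Real.exp (-u) ≤ 1 := Real.exp_le_one_iff.mpr (by linarith)
  linarith

lemma E_le_sq {u : ℝ} (hu : 0 ≤ u) : Real.exp (-u) - 1 + u ≤ u ^ 2 / 2 := by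
  set g : ℝ → ℝ := fun v => v ^ 2 / 2 - Real.exp (-v) + 1 - v with hg
  have hderiv : ∀ v : ℝ, HasDerivAt g (v + Real.exp (-v) - 1) v := by
    intro v
    have h1 : HasDerivAt (fun v : ℝ => v ^ 2 / 2) v v := by
      have := (hasDerivAt_pow 2 v).div_const 2
      simpa using this
    have h2 : HasDerivAt (fun v : ℝ => Real.exp (-v)) (-Real.exp (-v)) v := by
      have := (Real.hasDerivAt_exp (-v)).comp v (hasDerivAt_neg v)
      simpa [Function.comp_def] using this
    have := ((h1.sub h2).add_const 1).sub (hasDerivAt_id v)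
    convert this using 1 <;> first | rfl | ring
  have hmono : MonotoneOn g (Ici 0) := by
    apply monotoneOn_of_deriv_nonneg (convex_Ici 0)
    · exact Continuous.continuousOn (by continuity)
    · exact fun x hx => ((hderiv x).differentiableAt).differentiableWithinAt
    · intro x hx
      rw [(hderiv x).deriv]
      have := Real.add_one_le_exp (-x); linarith
  have h0 : g 0 ≤ g u := hmono (le_refl (0:ℝ)) hu hu
  simp only [hg, neg_zero, Real.exp_zero] at h0
  norm_num at h0
  linarith

lemma lintegral_Ioc_ofReal_eq {a b : ℝ} (hab : a ≤ b) {f : ℝ → ℝ}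
    (hf : IntegrableOn f (Set.Ioc a b)) (hpos : ∀ x ∈ Set.Ioc a b, 0 ≤ f x) :
    ∫⁻ r in Set.Ioc a b, ENNReal.ofReal (f r) = ENNReal.ofReal (∫ r in a..b, f r) := by
  rw [intervalIntegral.integral_of_le hab]
  exact (ofReal_integral_eq_lintegral_ofReal hf
    (ae_restrict_of_forall_mem measurableSet_Ioc hpos)).symm

-- small x bound
lemma measE (x : ℝ) :
    Measurable fun r : ℝ => ENNReal.ofReal ((Real.exp (-r * x) - 1 + r * x) / r ^ 2) := by
  apply Measurable.ennreal_ofReal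
  fun_prop

lemma G_small {x : ℝ} (hx0 : 0 < x) (hx : x < 1) :
    (∫⁻ r in Set.Ioc (0:ℝ) 1, ENNReal.ofReal ((Real.exp (-r * x) - 1 + r * x) / r ^ 2))
      ≤ ENNReal.ofReal (min x (x ^ 2)) := by
  have h1 : (∫⁻ r in Set.Ioc (0:ℝ) 1, ENNReal.ofReal ((Real.exp (-r * x) - 1 + r * x) / r ^ 2))
      ≤ ∫⁻ _ in Set.Ioc (0:ℝ) 1, ENNReal.ofReal (x ^ 2 / 2) := by
    apply setLIntegral_mono measurable_const
    intro r hr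
    apply ENNReal.ofReal_le_ofReal
    have hr0 : 0 < r := hr.1
    have hu : 0 ≤ r * x := by positivity
    have := E_le_sq hu
    rw [neg_mul] at *
    rw [div_le_iff₀ (by positivity : (0:ℝ) < r ^ 2)]
    calc Real.exp (-(r * x)) - 1 + r * x ≤ (r * x) ^ 2 / 2 := this
      _ = x ^ 2 / 2 * r ^ 2 := by ring
  calc _ ≤ _ := h1
    _ = ENNReal.ofReal (x ^ 2 / 2) := by
        rw [setLIntegral_const, Real.volume_Ioc]
        norm_num
    _ ≤ ENNReal.ofReal (min x (x ^ 2)) := by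
        apply ENNReal.ofReal_le_ofReal
        have : x ^ 2 ≤ x := by nlinarith
        rw [min_eq_right this]
        linarith [sq_nonneg x]

lemma G_upper {x : ℝ} (hx : 1 ≤ x) :
    (∫⁻ r in Set.Ioc (0:ℝ) 1, ENNReal.ofReal ((Real.exp (-r * x) - 1 + r * x) / r ^ 2))
      ≤ ENNReal.ofReal (x * Real.log x) + ENNReal.ofReal x := by
  have hx0 : (0:ℝ) < x := lt_of_lt_of_le one_pos hx
  set a : ℝ := 1 / x with ha
  have ha0 : 0 < a := by positivity
  have ha1 : a ≤ 1 := by rw [ha, div_le_one hx0]; exact hx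
  have hsplit : Set.Ioc (0:ℝ) 1 = Set.Ioc 0 a ∪ Set.Ioc a 1 :=
    (Set.Ioc_union_Ioc_eq_Ioc ha0.le ha1).symm
  rw [hsplit, lintegral_union measurableSet_Ioc (Set.Ioc_disjoint_Ioc_of_le le_rfl)]
  have h1 : (∫⁻ r in Set.Ioc (0:ℝ) a, ENNReal.ofReal ((Real.exp (-r * x) - 1 + r * x) / r ^ 2))
      ≤ ENNReal.ofReal x := by
    calc (∫⁻ r in Set.Ioc (0:ℝ) a, ENNReal.ofReal ((Real.exp (-r * x) - 1 + r * x) / r ^ 2))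
        ≤ ∫⁻ _ in Set.Ioc (0:ℝ) a, ENNReal.ofReal (x ^ 2 / 2) := by
          apply setLIntegral_mono measurable_const
          intro r hr
          apply ENNReal.ofReal_le_ofReal
          have hr0 : 0 < r := hr.1
          have hu : 0 ≤ r * x := by positivity
          have := E_le_sq hu
          rw [neg_mul] at *
          rw [div_le_iff₀ (by positivity : (0:ℝ) < r ^ 2)]
          calc Real.exp (-(r * x)) - 1 + r * x ≤ (r * x) ^ 2 / 2 := this
            _ = x ^ 2 / 2 * r ^ 2 := by ring
      _ = ENNReal.ofReal (x ^ 2 / 2) * ENNReal.ofReal a := by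
          rw [setLIntegral_const, Real.volume_Ioc, sub_zero]
      _ = ENNReal.ofReal (x ^ 2 / 2 * a) := by
          rw [ENNReal.ofReal_mul (by positivity)]
      _ ≤ ENNReal.ofReal x := by
          apply ENNReal.ofReal_le_ofReal
          have hxx : x ^ 2 / 2 * a = x / 2 := by rw [ha]; field_simp
          rw [hxx]; linarith
  have h2 : (∫⁻ r in Set.Ioc a 1, ENNReal.ofReal ((Real.exp (-r * x) - 1 + r * x) / r ^ 2))
      ≤ ENNReal.ofReal (x * Real.log x) := by
    have hb : (∫⁻ r in Set.Ioc a 1, ENNReal.ofReal ((Real.exp (-r * x) - 1 + r * x) / r ^ 2))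
        ≤ ∫⁻ r in Set.Ioc a 1, ENNReal.ofReal (x * (1 / r)) := by
      apply setLIntegral_mono (by fun_prop)
      intro r hr
      apply ENNReal.ofReal_le_ofReal
      have hr0 : 0 < r := lt_of_lt_of_le ha0 hr.1.le
      have hu : 0 ≤ r * x := by positivity
      have hE := E_le_linear hu
      rw [neg_mul]
      calc (Real.exp (-(r * x)) - 1 + r * x) / r ^ 2 ≤ (r * x) / r ^ 2 := by
            exact div_le_div_of_nonneg_right hE (by positivity)
        _ = x * (1 / r) := by field_simp
    have hcont : ContinuousOn (fun r : ℝ => x * (1 / r)) (Set.Icc a 1) := by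
      apply ContinuousOn.mul continuousOn_const
      apply ContinuousOn.div continuousOn_const continuousOn_id
      intro r hr; exact ne_of_gt (lt_of_lt_of_le ha0 hr.1)
    have hInt : IntegrableOn (fun r : ℝ => x * (1 / r)) (Set.Ioc a 1) :=
      (hcont.integrableOn_Icc).mono_set Set.Ioc_subset_Icc_self
    have hval : (∫ r in a..1, x * (1 / r)) = x * Real.log x := by
      rw [intervalIntegral.integral_const_mul, integral_one_div
        (Set.notMem_uIcc_of_lt ha0 one_pos)]
      rw [ha, one_div_one_div]
    have hnn2 : ∀ r ∈ Set.Ioc a 1, 0 ≤ x * (1 / r) := by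
      intro r hr
      have hr0 : 0 < r := lt_of_lt_of_le ha0 hr.1.le
      positivity
    calc _ ≤ _ := hb
      _ = ENNReal.ofReal (x * Real.log x) := by
          rw [lintegral_Ioc_ofReal_eq ha1 hInt hnn2, hval]
  calc _ ≤ ENNReal.ofReal x + ENNReal.ofReal (x * Real.log x) := add_le_add h1 h2
    _ = _ := add_comm _ _

lemma G_lower {x : ℝ} (hx : 1 ≤ x) :
    ENNReal.ofReal (x * Real.log x) ≤
      (∫⁻ r in Set.Ioc (0:ℝ) 1, ENNReal.ofReal ((Real.exp (-r * x) - 1 + r * x) / r ^ 2))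
        + ENNReal.ofReal x := by
  have hx0 : (0:ℝ) < x := lt_of_lt_of_le one_pos hx
  set a : ℝ := 1 / x with ha
  have ha0 : 0 < a := by positivity
  have ha1 : a ≤ 1 := by rw [ha, div_le_one hx0]; exact hx
  have hcont1 : ContinuousOn (fun r : ℝ => x * (1 / r) - 1 / r ^ 2) (Set.Icc a 1) := by
    apply ContinuousOn.sub
    · apply ContinuousOn.mul continuousOn_const
      apply ContinuousOn.div continuousOn_const continuousOn_id
      intro r hr; exact ne_of_gt (lt_of_lt_of_le ha0 hr.1)
    · apply ContinuousOn.div continuousOn_const (by fun_prop)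
      intro r hr; exact pow_ne_zero 2 (ne_of_gt (lt_of_lt_of_le ha0 hr.1))
  have hIntOn : IntegrableOn (fun r : ℝ => x * (1 / r) - 1 / r ^ 2) (Set.Ioc a 1) :=
    (hcont1.integrableOn_Icc).mono_set Set.Ioc_subset_Icc_self
  have hnn : ∀ r ∈ Set.Ioc a 1, 0 ≤ x * (1 / r) - 1 / r ^ 2 := by
    intro r hr
    have hr0 : 0 < r := lt_of_lt_of_le ha0 hr.1.le
    have h1 : 1 ≤ x * r := by
      have := hr.1
      rw [ha, div_lt_iff₀ hx0] at this
      nlinarith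
    have heq : x * (1 / r) - 1 / r ^ 2 = (x * r - 1) / r ^ 2 := by
      field_simp
    rw [heq]
    exact div_nonneg (by linarith) (by positivity)
  have hval : (∫ r in a..1, (x * (1 / r) - 1 / r ^ 2)) = x * Real.log x - (x - 1) := by
    have huIcc : Set.uIcc a (1:ℝ) = Set.Icc a 1 := Set.uIcc_of_le ha1
    have hi1 : IntervalIntegrable (fun r : ℝ => x * (1 / r)) volume a 1 := by
      apply ContinuousOn.intervalIntegrable
      rw [huIcc]
      apply ContinuousOn.mul continuousOn_const
      apply ContinuousOn.div continuousOn_const continuousOn_id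
      intro r hr; exact ne_of_gt (lt_of_lt_of_le ha0 hr.1)
    have hi2 : IntervalIntegrable (fun r : ℝ => 1 / r ^ 2) volume a 1 := by
      apply ContinuousOn.intervalIntegrable
      rw [huIcc]
      apply ContinuousOn.div continuousOn_const (by fun_prop)
      intro r hr; exact pow_ne_zero 2 (ne_of_gt (lt_of_lt_of_le ha0 hr.1))
    rw [intervalIntegral.integral_sub hi1 hi2]
    have e1 : (∫ r in a..1, x * (1 / r)) = x * Real.log x := by
      rw [intervalIntegral.integral_const_mul, integral_one_div
        (Set.notMem_uIcc_of_lt ha0 one_pos)]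
      rw [ha, one_div_one_div]
    have e2 : (∫ r in a..1, 1 / r ^ 2) = x - 1 := by
      have hfun : (fun r : ℝ => 1 / r ^ 2) = fun r : ℝ => r ^ (-2 : ℤ) := by
        funext r
        rw [zpow_neg, ← one_div, zpow_two, sq]
      rw [hfun, integral_zpow
        (Or.inr ⟨by norm_num, Set.notMem_uIcc_of_lt ha0 one_pos⟩)]
      rw [ha]
      norm_num
      ring
    rw [e1, e2]
  have key : ENNReal.ofReal (x * Real.log x - (x - 1)) ≤
      ∫⁻ r in Set.Ioc (0:ℝ) 1, ENNReal.ofReal ((Real.exp (-r * x) - 1 + r * x) / r ^ 2) := by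
    calc ENNReal.ofReal (x * Real.log x - (x - 1))
        = ∫⁻ r in Set.Ioc a 1, ENNReal.ofReal (x * (1 / r) - 1 / r ^ 2) := by
          rw [← hval]; exact (lintegral_Ioc_ofReal_eq ha1 hIntOn hnn).symm
      _ ≤ ∫⁻ r in Set.Ioc a 1,
            ENNReal.ofReal ((Real.exp (-r * x) - 1 + r * x) / r ^ 2) := by
          apply setLIntegral_mono (measE x)
          intro r hr
          apply ENNReal.ofReal_le_ofReal
          have hr0 : 0 < r := lt_of_lt_of_le ha0 hr.1.le
          have heq : x * (1 / r) - 1 / r ^ 2 = (r * x - 1) / r ^ 2 := by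
            field_simp
          rw [heq, neg_mul]
          exact div_le_div_of_nonneg_right (E_ge (r * x)) (by positivity)
      _ ≤ _ := lintegral_mono_set (Set.Ioc_subset_Ioc ha0.le le_rfl)
  calc ENNReal.ofReal (x * Real.log x)
      = ENNReal.ofReal ((x * Real.log x - (x - 1)) + (x - 1)) := by ring_nf
    _ ≤ ENNReal.ofReal (x * Real.log x - (x - 1)) + ENNReal.ofReal (x - 1) :=
        ENNReal.ofReal_add_le
    _ ≤ _ := add_le_add key (ENNReal.ofReal_le_ofReal (by linarith))

/-- With `ψ₀(λ) = βλ² + ∫_{(0,∞)} (e^{-λx} - 1 + λx) ν(dx)`,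
`∫_0^1 r^{-2} ψ₀(r) dr < ∞` if and only if `∫_{[1,∞)} x log x ν(dx) < ∞`. -/
theorem xlogx_moment_iff
    (β : ℝ) (hβ : 0 ≤ β)
    (ν : Measure ℝ) (hν0 : ν (Set.Iic 0) = 0)
    (hν : ∫⁻ x, ENNReal.ofReal (min x (x ^ 2)) ∂ν ≠ ⊤)
    (ψ₀ : ℝ → ℝ)
    (hψ₀ : ∀ l : ℝ, ψ₀ l = β * l ^ 2 + ∫ x, (Real.exp (-l * x) - 1 + l * x) ∂ν) :
    (∫⁻ r in Set.Ioc (0 : ℝ) 1, ENNReal.ofReal (ψ₀ r / r ^ 2) ≠ ⊤) ↔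
    (∫⁻ x in Set.Ici (1 : ℝ), ENNReal.ofReal (x * Real.log x) ∂ν ≠ ⊤) := by
  have haepos : ∀ᵐ x ∂ν, 0 < x := by
    rw [ae_iff]
    have hset : {x : ℝ | ¬ 0 < x} = Set.Iic 0 := by ext x; simp
    rw [hset]; exact hν0
  have hminmeas : Measurable fun x : ℝ => min x (x ^ 2) := by fun_prop
  have hmin_nn : 0 ≤ᵐ[ν] fun x : ℝ => min x (x ^ 2) := by
    filter_upwards [haepos] with x hx
    exact le_min hx.le (sq_nonneg x)
  have hmin_int : Integrable (fun x : ℝ => min x (x ^ 2)) ν := by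
    refine ⟨hminmeas.aestronglyMeasurable, ?_⟩
    rw [hasFiniteIntegral_iff_ofReal hmin_nn]
    exact hν.lt_top
  have hInt : ∀ r ∈ Set.Ioc (0:ℝ) 1,
      Integrable (fun x => Real.exp (-r * x) - 1 + r * x) ν := by
    intro r hr
    apply hmin_int.mono' (Measurable.aestronglyMeasurable (by fun_prop))
    filter_upwards [haepos] with x hx
    have hu : 0 ≤ r * x := mul_nonneg hr.1.le hx.le
    have hrx : r * x ≤ x := by nlinarith [hr.2, hx.le]
    rw [Real.norm_eq_abs, abs_of_nonneg (by rw [neg_mul]; exact E_nonneg _)]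
    rw [neg_mul]
    refine le_min ?_ ?_
    · calc Real.exp (-(r * x)) - 1 + r * x ≤ r * x := E_le_linear hu
        _ ≤ x := hrx
    · have h2 : (r * x) ^ 2 ≤ x ^ 2 := pow_le_pow_left₀ hu hrx 2
      calc Real.exp (-(r * x)) - 1 + r * x ≤ (r * x) ^ 2 / 2 := E_le_sq hu
        _ ≤ x ^ 2 := by linarith [sq_nonneg (r * x)]
  haveI hsig : SigmaFinite ν := by
    have hrestr : ν.restrict (Set.Ioi 0) = ν :=
      Measure.restrict_eq_self_of_ae_mem (by filter_upwards [haepos] with x hx using hx)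
    rw [← hrestr]
    refine ⟨⟨⟨fun n => Set.Iic 0 ∪ {x : ℝ | 1 / (n + 1 : ℝ) ≤ min x (x ^ 2)},
      fun _ => trivial, fun n => ?_, ?_⟩⟩⟩
    · have hSn : MeasurableSet {x : ℝ | 1 / (n + 1 : ℝ) ≤ min x (x ^ 2)} :=
        hminmeas measurableSet_Ici
      have h1 : (ν.restrict (Set.Ioi 0)) (Set.Iic 0) = 0 := by
        rw [Measure.restrict_apply measurableSet_Iic]
        exact le_antisymm (le_trans (measure_mono Set.inter_subset_left) hν0.le) (zero_le' )
      have hc : (0:ℝ) < 1 / (n + 1 : ℝ) := by positivity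
      have hMarkov : ν {x : ℝ | 1 / (n + 1 : ℝ) ≤ min x (x ^ 2)} < ⊤ := by
        have hsub : {x : ℝ | 1 / (n + 1 : ℝ) ≤ min x (x ^ 2)} ⊆
            {x : ℝ | ENNReal.ofReal (1 / (n + 1 : ℝ)) ≤ ENNReal.ofReal (min x (x ^ 2))} :=
          fun x hx => ENNReal.ofReal_le_ofReal hx
        calc ν {x : ℝ | 1 / (n + 1 : ℝ) ≤ min x (x ^ 2)}
            ≤ ν {x : ℝ | ENNReal.ofReal (1 / (n + 1 : ℝ))
                ≤ ENNReal.ofReal (min x (x ^ 2))} := measure_mono hsub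
          _ ≤ (∫⁻ x, ENNReal.ofReal (min x (x ^ 2)) ∂ν) /
                ENNReal.ofReal (1 / (n + 1 : ℝ)) :=
              meas_ge_le_lintegral_div (hminmeas.ennreal_ofReal.aemeasurable)
                ((ENNReal.ofReal_pos.mpr hc).ne') ENNReal.ofReal_ne_top
          _ < ⊤ := ENNReal.div_lt_top hν ((ENNReal.ofReal_pos.mpr hc).ne')
      calc (ν.restrict (Set.Ioi 0)) (Set.Iic 0 ∪ {x : ℝ | 1 / (n + 1 : ℝ) ≤ min x (x ^ 2)})
          ≤ (ν.restrict (Set.Ioi 0)) (Set.Iic 0) +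
            (ν.restrict (Set.Ioi 0)) {x : ℝ | 1 / (n + 1 : ℝ) ≤ min x (x ^ 2)} :=
            measure_union_le _ _
        _ = (ν.restrict (Set.Ioi 0)) {x : ℝ | 1 / (n + 1 : ℝ) ≤ min x (x ^ 2)} := by
            rw [h1, zero_add]
        _ ≤ ν {x : ℝ | 1 / (n + 1 : ℝ) ≤ min x (x ^ 2)} := by
            rw [Measure.restrict_apply hSn]
            exact measure_mono Set.inter_subset_left
        _ < ⊤ := hMarkov
    · ext x
      simp only [Set.mem_iUnion, Set.mem_union, Set.mem_univ, iff_true, Set.mem_setOf_eq,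
        Set.mem_Iic]
      by_cases hx : x ≤ 0
      · exact ⟨0, Or.inl hx⟩
      · push_neg at hx
        have hm : 0 < min x (x ^ 2) := lt_min hx (by positivity)
        obtain ⟨n, hn⟩ := exists_nat_one_div_lt hm
        exact ⟨n, Or.inr hn.le⟩
  have hpt : ∀ r ∈ Set.Ioc (0:ℝ) 1,
      ENNReal.ofReal (ψ₀ r / r ^ 2) = ENNReal.ofReal β +
        ∫⁻ x, ENNReal.ofReal ((Real.exp (-r * x) - 1 + r * x) / r ^ 2) ∂ν := by
    intro r hr
    have hr0 : (0:ℝ) < r := hr.1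
    have hr2 : (0:ℝ) < r ^ 2 := by positivity
    have hnnI : 0 ≤ᵐ[ν] fun x => (Real.exp (-r * x) - 1 + r * x) / r ^ 2 := by
      filter_upwards with x
      exact div_nonneg (by rw [neg_mul]; exact E_nonneg _) hr2.le
    have hIint : Integrable (fun x => (Real.exp (-r * x) - 1 + r * x) / r ^ 2) ν :=
      (hInt r hr).div_const _
    have hsplit : ψ₀ r / r ^ 2 = β + (∫ x, (Real.exp (-r * x) - 1 + r * x) ∂ν) / r ^ 2 := by
      rw [hψ₀ r, add_div, mul_div_assoc, div_self hr2.ne', mul_one]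
    rw [hsplit, ENNReal.ofReal_add hβ (div_nonneg
      (integral_nonneg fun x => by rw [neg_mul]; exact E_nonneg _) hr2.le)]
    congr 1
    rw [← integral_div, ofReal_integral_eq_lintegral_ofReal hIint hnnI]
  have hLHS : (∫⁻ r in Set.Ioc (0:ℝ) 1, ENNReal.ofReal (ψ₀ r / r ^ 2))
      = ENNReal.ofReal β +
        ∫⁻ x, (∫⁻ r in Set.Ioc (0:ℝ) 1,
          ENNReal.ofReal ((Real.exp (-r * x) - 1 + r * x) / r ^ 2)) ∂ν := by
    rw [setLIntegral_congr_fun measurableSet_Ioc hpt]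
    rw [lintegral_add_left measurable_const, setLIntegral_const, Real.volume_Ioc]
    have hswap : (∫⁻ r in Set.Ioc (0:ℝ) 1, ∫⁻ x,
          ENNReal.ofReal ((Real.exp (-r * x) - 1 + r * x) / r ^ 2) ∂ν)
        = ∫⁻ x, (∫⁻ r in Set.Ioc (0:ℝ) 1,
          ENNReal.ofReal ((Real.exp (-r * x) - 1 + r * x) / r ^ 2)) ∂ν := by
      have hm : Measurable fun p : ℝ × ℝ =>
          ENNReal.ofReal ((Real.exp (-p.1 * p.2) - 1 + p.1 * p.2) / p.1 ^ 2) := by fun_prop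
      exact lintegral_lintegral_swap (μ := volume.restrict (Set.Ioc (0:ℝ) 1)) (ν := ν)
        (f := fun r x => ENNReal.ofReal ((Real.exp (-r * x) - 1 + r * x) / r ^ 2))
        (Measurable.aemeasurable hm)
    rw [hswap, sub_zero, ENNReal.ofReal_one, mul_one]
  set G : ℝ → ℝ≥0∞ := fun x => ∫⁻ r in Set.Ioc (0:ℝ) 1,
    ENNReal.ofReal ((Real.exp (-r * x) - 1 + r * x) / r ^ 2) with hG
  set A := ∫⁻ x in Set.Ici (1:ℝ), G x ∂ν with hA'
  set B := ∫⁻ x in Set.Iio (1:ℝ), G x ∂ν with hB'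
  set K := ∫⁻ x in Set.Ici (1:ℝ), ENNReal.ofReal x ∂ν with hK'
  set RHS := ∫⁻ x in Set.Ici (1:ℝ), ENNReal.ofReal (x * Real.log x) ∂ν with hRHS'
  have hdecomp : (∫⁻ x, G x ∂ν) = A + B := by
    rw [hA', hB', ← Set.compl_Ici (a := (1:ℝ))]
    exact (lintegral_add_compl G measurableSet_Ici).symm
  have hB : B ≠ ⊤ := by
    have hle : B ≤ ∫⁻ x in Set.Iio 1, ENNReal.ofReal (min x (x ^ 2)) ∂ν := by
      apply lintegral_mono_ae
      filter_upwards [ae_restrict_mem measurableSet_Iio, ae_restrict_of_ae haepos]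
        with x hx1 hx2
      exact G_small hx2 hx1
    exact ne_top_of_le_ne_top (ne_top_of_le_ne_top hν (setLIntegral_le_lintegral _ _)) hle
  have hK : K ≠ ⊤ := by
    have heq : ∀ x ∈ Set.Ici (1:ℝ), ENNReal.ofReal x = ENNReal.ofReal (min x (x ^ 2)) := by
      intro x hx
      rw [min_eq_left (by nlinarith [mem_Ici.mp hx] : x ≤ x ^ 2)]
    rw [hK', setLIntegral_congr_fun measurableSet_Ici heq]
    exact ne_top_of_le_ne_top hν (setLIntegral_le_lintegral _ _)
  have hup : A ≤ RHS + K := by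
    calc A ≤ ∫⁻ x in Set.Ici (1:ℝ),
        (ENNReal.ofReal (x * Real.log x) + ENNReal.ofReal x) ∂ν := by
          apply lintegral_mono_ae
          filter_upwards [ae_restrict_mem measurableSet_Ici] with x hx
          exact G_upper hx
      _ = RHS + K := lintegral_add_left ((measurable_id.mul Real.measurable_log).ennreal_ofReal) _
  have hdown : RHS ≤ A + K := by
    calc RHS ≤ ∫⁻ x in Set.Ici (1:ℝ), (G x + ENNReal.ofReal x) ∂ν := by
          apply lintegral_mono_ae
          filter_upwards [ae_restrict_mem measurableSet_Ici] with x hx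
          exact G_lower hx
      _ = A + K := lintegral_add_right G (measurable_id.ennreal_ofReal)
  rw [hLHS, hdecomp]
  constructor
  · intro h
    have hA : A ≠ ⊤ := by
      intro hAtop
      rw [hAtop] at h
      simp at h
    exact ne_top_of_le_ne_top (ENNReal.add_ne_top.mpr ⟨hA, hK⟩) hdown
  · intro h
    have hA : A ≠ ⊤ := ne_top_of_le_ne_top (ENNReal.add_ne_top.mpr ⟨h, hK⟩) hup
    exact ENNReal.add_ne_top.mpr ⟨ENNReal.ofReal_ne_top, ENNReal.add_ne_top.mpr ⟨hA, hB⟩⟩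
end

section
/- Let β ≥ 0 and let ν be a measure on (0,∞) with ∫_{(0,∞)} (x ∧ x²) ν(dx) < ∞, and set ψ₀(λ) = βλ² + ∫_{(0,∞)} (e^{-λx} - 1 + λx) ν(dx) for λ ≥ 0. Then ∫_0^1 r^{-2} |log r| ψ₀(r) dr < ∞ if and only if ∫_{[1,∞)} x (log x)² ν(dx) < ∞. -/
open MeasureTheory Real Set

namespace XAux

noncomputable def gg (r x : ℝ) : ℝ := Real.exp (-(r * x)) - 1 + r * x
noncomputable def cc (r : ℝ) : ℝ := -Real.log r / r ^ 2

lemma gg_nonneg (r x : ℝ) : 0 ≤ gg r x := by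
  have := Real.add_one_le_exp (-(r * x))
  unfold gg; linarith

lemma gg_le_lin {r x : ℝ} (h : 0 ≤ r * x) : gg r x ≤ r * x := by
  have : Real.exp (-(r * x)) ≤ 1 := Real.exp_le_one_iff.mpr (by linarith)
  unfold gg; linarith

lemma gg_le_sq {r x : ℝ} (h : 0 ≤ r * x) : gg r x ≤ (r * x) ^ 2 := by
  rcases le_or_gt (r * x) 1 with h1 | h1
  · have := Real.abs_exp_sub_one_sub_id_le (x := -(r * x)) (by rw [abs_of_nonpos (by linarith)]; linarith)
    have h2 : Real.exp (-(r*x)) - 1 - -(r*x) ≤ (-(r*x))^2 := (abs_le.mp this).2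
    unfold gg; nlinarith
  · have := gg_le_lin h
    nlinarith
    
lemma gg_ge {r x : ℝ} (h : 2 ≤ r * x) : r * x / 2 ≤ gg r x := by
  have := Real.exp_nonneg (-(r * x))
  unfold gg; linarith

lemma cc_nonneg {r : ℝ} (hr : r ∈ Set.Ioc (0:ℝ) 1) : 0 ≤ cc r := by
  have := Real.log_nonpos (le_of_lt hr.1) hr.2
  unfold cc
  apply div_nonneg (by linarith) (by positivity)

lemma neglog_le {r : ℝ} (hr : 0 < r) : -Real.log r ≤ 2 * r ^ (-(1/2) : ℝ) := by
  have h1 : Real.log (r ^ (-(1/2):ℝ)) ≤ r ^ (-(1/2):ℝ) - 1 :=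
    Real.log_le_sub_one_of_pos (Real.rpow_pos_of_pos hr _)
  rw [Real.log_rpow hr] at h1
  have := Real.rpow_pos_of_pos hr (-(1/2):ℝ)
  linarith

-- log u ≤ 2 * sqrt u for u ≥ 1 in the form: log (a/r) bound
lemma log_div_le {a r : ℝ} (hr : 0 < r) (ha : 0 < a) :
    Real.log a - Real.log r ≤ 2 * a ^ ((1:ℝ)/2) * r ^ (-(1/2) : ℝ) := by
  have h := Real.log_le_sub_one_of_pos (x := (a/r) ^ ((1:ℝ)/2)) (Real.rpow_pos_of_pos (div_pos ha hr) _)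
  rw [Real.log_rpow (div_pos ha hr), Real.log_div (ne_of_gt ha) (ne_of_gt hr)] at h
  have h2 : ((a/r) ^ ((1:ℝ)/2)) = a ^ ((1:ℝ)/2) * r ^ (-(1/2):ℝ) := by
    rw [Real.div_rpow (le_of_lt ha) (le_of_lt hr), Real.rpow_neg (le_of_lt hr)]
    ring
  rw [h2] at h
  have := Real.rpow_pos_of_pos ha ((1:ℝ)/2)
  have := Real.rpow_pos_of_pos hr (-(1/2):ℝ)
  nlinarith

end XAux

namespace XAux
open scoped ENNReal

lemma lint_ofReal_eq {s : Set ℝ} (hs : MeasurableSet s) {h : ℝ → ℝ}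
    (hint : IntegrableOn h s) (h0 : ∀ r ∈ s, 0 ≤ h r) :
    ∫⁻ r in s, ENNReal.ofReal (h r) = ENNReal.ofReal (∫ r in s, h r) :=
  (ofReal_integral_eq_lintegral_ofReal hint ((ae_restrict_iff' hs).2 (ae_of_all _ h0))).symm

lemma integrableOn_rpow_half {a b : ℝ} (hab : a ≤ b) :
    IntegrableOn (fun r : ℝ => r ^ (-(1/2):ℝ)) (Set.Ioc a b) :=
  (intervalIntegral.intervalIntegrable_rpow' (by norm_num : (-1:ℝ) < -(1/2))).1

lemma integral_rpow_half {a b : ℝ} (ha : 0 ≤ a) (hab : a ≤ b) :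
    ∫ r in Set.Ioc a b, r ^ (-(1/2):ℝ) = 2 * b ^ ((1:ℝ)/2) - 2 * a ^ ((1:ℝ)/2) := by
  rw [← intervalIntegral.integral_of_le hab]
  rw [integral_rpow (Or.inl (by norm_num : (-1:ℝ) < -(1/2)))]
  have h : (-(1/2) : ℝ) + 1 = 1/2 := by norm_num
  rw [h]
  ring

lemma integral_neglog_div {a : ℝ} (ha : 0 < a) (ha1 : a ≤ 1) :
    ∫ r in Set.Ioc a 1, (-Real.log r / r) = Real.log a ^ 2 / 2 := by
  rw [← intervalIntegral.integral_of_le ha1]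
  have hpos : ∀ r ∈ Set.uIcc a 1, (0:ℝ) < r := by
    intro r hr
    rw [Set.uIcc_of_le ha1] at hr
    exact lt_of_lt_of_le ha hr.1
  have hderiv : ∀ r ∈ Set.uIcc a 1,
      HasDerivAt (fun t => -(Real.log t ^ 2 / 2)) (-Real.log r / r) r := by
    intro r hr
    have hr0 := hpos r hr
    have h1 : HasDerivAt (fun t => -(Real.log t ^ 2 / 2))
        (-((2:ℕ) * Real.log r ^ (2-1) * r⁻¹ / 2)) r :=
      (((Real.hasDerivAt_log hr0.ne').pow 2).div_const 2).neg
    have h2 : -((2:ℕ) * Real.log r ^ (2-1) * r⁻¹ / 2) = -Real.log r / r := by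
      field_simp; ring
    rwa [h2] at h1
  have hcont : ContinuousOn (fun r : ℝ => -Real.log r / r) (Set.uIcc a 1) := by
    apply ContinuousOn.div
    · exact (Real.continuousOn_log.mono (fun x hx => by
        simp only [Set.mem_compl_iff, Set.mem_singleton_iff]
        exact (hpos x hx).ne')).neg
    · exact continuousOn_id
    · exact fun x hx => (hpos x hx).ne'
  rw [intervalIntegral.integral_eq_sub_of_hasDerivAt hderiv hcont.intervalIntegrable]
  simp [Real.log_one]

lemma measurable_core : Measurable
    (fun p : ℝ × ℝ => ENNReal.ofReal (cc p.1 * gg p.1 p.2)) := by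
  apply Measurable.ennreal_ofReal
  unfold cc gg
  have h1 : Measurable fun p : ℝ × ℝ => Real.exp (-(p.1 * p.2)) :=
    (Real.continuous_exp.comp ((continuous_fst.mul continuous_snd).neg)).measurable
  exact (Real.measurable_log.comp measurable_fst).neg.div (measurable_fst.pow_const 2)
    |>.mul ((h1.sub measurable_const).add (measurable_fst.mul measurable_snd))

lemma sigmaFinite_of_moment (ν : Measure ℝ) (hν0 : ν (Set.Iic 0) = 0)
    (hν : ∫⁻ x, ENNReal.ofReal (min x (x^2)) ∂ν ≠ ⊤) : SigmaFinite ν := by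
  have hm : Measurable fun x : ℝ => ENNReal.ofReal (min x (x^2)) := by fun_prop
  refine ⟨⟨⟨fun n => Set.Iic 0 ∪ {x : ℝ | (1:ℝ)/(n+1) ≤ min x (x^2)}, fun _ => trivial, ?_, ?_⟩⟩⟩
  · intro n
    have hsub : {x : ℝ | (1:ℝ)/(n+1) ≤ min x (x^2)} ⊆
        {x : ℝ | ENNReal.ofReal ((1:ℝ)/(n+1)) ≤ ENNReal.ofReal (min x (x^2))} :=
      fun x hx => ENNReal.ofReal_le_ofReal hx
    have hε0 : (ENNReal.ofReal ((1:ℝ)/(n+1))) ≠ 0 := by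
      simp only [ne_eq, ENNReal.ofReal_eq_zero, not_le]
      positivity
    have hmark := meas_ge_le_lintegral_div (μ := ν) hm.aemeasurable hε0 ENNReal.ofReal_ne_top
    calc ν (Set.Iic 0 ∪ {x : ℝ | (1:ℝ)/(n+1) ≤ min x (x^2)})
        ≤ ν (Set.Iic 0) + ν {x : ℝ | (1:ℝ)/(n+1) ≤ min x (x^2)} := measure_union_le _ _
      _ ≤ 0 + ν {x : ℝ | ENNReal.ofReal ((1:ℝ)/(n+1)) ≤ ENNReal.ofReal (min x (x^2))} := by
          rw [hν0]; exact add_le_add le_rfl (measure_mono hsub)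
      _ < ⊤ := by
          rw [zero_add]
          exact lt_of_le_of_lt hmark (ENNReal.div_lt_top hν hε0)
  · apply Set.eq_univ_of_forall
    intro x
    rcases le_or_gt x 0 with hx | hx
    · exact Set.mem_iUnion.mpr ⟨0, Or.inl hx⟩
    · have hmin : 0 < min x (x^2) := lt_min hx (by positivity)
      obtain ⟨n, hn⟩ := exists_nat_one_div_lt hmin
      exact Set.mem_iUnion.mpr ⟨n, Or.inr (le_of_lt hn)⟩

end XAux

namespace XAux
open scoped ENNReal

noncomputable def FF (x : ℝ) : ℝ≥0∞ :=
  ∫⁻ r in Set.Ioc (0:ℝ) 1, ENNReal.ofReal (cc r * gg r x)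

lemma integrableOn_neglog_div {a b : ℝ} (ha : 0 < a) (hab : a ≤ b) :
    IntegrableOn (fun r : ℝ => -Real.log r / r) (Set.Ioc a b) := by
  have hpos : ∀ r ∈ Set.Icc a b, (0:ℝ) < r := fun r hr => lt_of_lt_of_le ha hr.1
  have hcont : ContinuousOn (fun r : ℝ => -Real.log r / r) (Set.Icc a b) := by
    apply ContinuousOn.div
    · exact (Real.continuousOn_log.mono (fun x hx => by
        simp only [Set.mem_compl_iff, Set.mem_singleton_iff]
        exact (hpos x hx).ne')).neg
    · exact continuousOn_id
    · exact fun x hx => (hpos x hx).ne'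
  exact (hcont.integrableOn_Icc).mono_set Set.Ioc_subset_Icc_self

lemma FF_upper_small {x : ℝ} (hx : x ∈ Set.Ioc (0:ℝ) 1) :
    FF x ≤ ENNReal.ofReal (4 * x ^ 2) := by
  have hbound : ∀ r ∈ Set.Ioc (0:ℝ) 1,
      ENNReal.ofReal (cc r * gg r x) ≤ ENNReal.ofReal ((2 * x ^ 2) * r ^ (-(1/2):ℝ)) := by
    intro r hr
    apply ENNReal.ofReal_le_ofReal
    have h1 : gg r x ≤ (r * x) ^ 2 := gg_le_sq (mul_nonneg hr.1.le hx.1.le)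
    have h2 : cc r * gg r x ≤ cc r * (r * x) ^ 2 :=
      mul_le_mul_of_nonneg_left h1 (cc_nonneg hr)
    have hrne : r ≠ 0 := hr.1.ne'
    have h3 : cc r * (r * x) ^ 2 = (-Real.log r) * x ^ 2 := by
      unfold cc; field_simp
    have h4 : -Real.log r ≤ 2 * r ^ (-(1/2):ℝ) := neglog_le hr.1
    have h5 : (0:ℝ) ≤ x ^ 2 := by positivity
    nlinarith [Real.rpow_pos_of_pos hr.1 (-(1/2):ℝ)]
  calc FF x ≤ ∫⁻ r in Set.Ioc (0:ℝ) 1, ENNReal.ofReal ((2 * x ^ 2) * r ^ (-(1/2):ℝ)) :=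
        lintegral_mono_ae ((ae_restrict_iff' measurableSet_Ioc).2 (ae_of_all _ hbound))
    _ = ENNReal.ofReal (∫ r in Set.Ioc (0:ℝ) 1, (2 * x ^ 2) * r ^ (-(1/2):ℝ)) := by
        apply lint_ofReal_eq measurableSet_Ioc
        · exact (integrableOn_rpow_half zero_le_one).const_mul _
        · intro r hr
          have := Real.rpow_nonneg hr.1.le (-(1/2):ℝ)
          positivity
    _ ≤ ENNReal.ofReal (4 * x ^ 2) := by
        apply ENNReal.ofReal_le_ofReal
        rw [integral_const_mul, integral_rpow_half le_rfl zero_le_one]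
        rw [Real.one_rpow, Real.zero_rpow (by norm_num)]
        nlinarith

lemma FF_upper_large {x : ℝ} (hx : 1 ≤ x) :
    FF x ≤ ENNReal.ofReal (5 * x + x * Real.log x ^ 2) := by
  have hx0 : (0:ℝ) < x := lt_of_lt_of_le one_pos hx
  have ha0 : (0:ℝ) < 1 / x := by positivity
  have ha1 : 1 / x ≤ 1 := by
    rw [div_le_one hx0]; exact hx
  have hlx : 0 ≤ Real.log x := Real.log_nonneg hx
  have hsplit : Set.Ioc (0:ℝ) (1/x) ∪ Set.Ioc (1/x) 1 = Set.Ioc (0:ℝ) 1 :=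
    Set.Ioc_union_Ioc_eq_Ioc ha0.le ha1
  have hFF : FF x = (∫⁻ r in Set.Ioc (0:ℝ) (1/x), ENNReal.ofReal (cc r * gg r x)) +
      ∫⁻ r in Set.Ioc (1/x) 1, ENNReal.ofReal (cc r * gg r x) := by
    rw [FF, ← hsplit, lintegral_union measurableSet_Ioc (Set.Ioc_disjoint_Ioc_of_le le_rfl)]
  -- Part 1
  have hpart1 : (∫⁻ r in Set.Ioc (0:ℝ) (1/x), ENNReal.ofReal (cc r * gg r x)) ≤
      ENNReal.ofReal (x * Real.log x + 4 * x) := by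
    have hbound : ∀ r ∈ Set.Ioc (0:ℝ) (1/x),
        ENNReal.ofReal (cc r * gg r x) ≤
        ENNReal.ofReal (x ^ 2 * Real.log x + (2 * x ^ 2 * (1/x) ^ ((1:ℝ)/2)) * r ^ (-(1/2):ℝ)) := by
      intro r hr
      have hr0 : 0 < r := hr.1
      have hrIoc : r ∈ Set.Ioc (0:ℝ) 1 := ⟨hr.1, le_trans hr.2 ha1⟩
      apply ENNReal.ofReal_le_ofReal
      have h1 : gg r x ≤ (r * x) ^ 2 := gg_le_sq (mul_nonneg hr0.le hx0.le)
      have h2 : cc r * gg r x ≤ cc r * (r * x) ^ 2 :=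
        mul_le_mul_of_nonneg_left h1 (cc_nonneg hrIoc)
      have hrne : r ≠ 0 := hr0.ne'
      have h3 : cc r * (r * x) ^ 2 = (-Real.log r) * x ^ 2 := by
        unfold cc; field_simp
      have h4 : Real.log (1/x) - Real.log r ≤ 2 * (1/x) ^ ((1:ℝ)/2) * r ^ (-(1/2):ℝ) :=
        log_div_le hr0 ha0
      have h5 : Real.log (1/x) = -Real.log x := by
        rw [one_div, Real.log_inv]
      rw [h5] at h4
      have h6 : -Real.log r ≤ Real.log x + 2 * (1/x) ^ ((1:ℝ)/2) * r ^ (-(1/2):ℝ) := by linarith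
      have h7 : (0:ℝ) ≤ x ^ 2 := by positivity
      nlinarith
    calc (∫⁻ r in Set.Ioc (0:ℝ) (1/x), ENNReal.ofReal (cc r * gg r x)) ≤
        ∫⁻ r in Set.Ioc (0:ℝ) (1/x),
          ENNReal.ofReal (x ^ 2 * Real.log x + (2 * x ^ 2 * (1/x) ^ ((1:ℝ)/2)) * r ^ (-(1/2):ℝ)) :=
          lintegral_mono_ae ((ae_restrict_iff' measurableSet_Ioc).2 (ae_of_all _ hbound))
      _ = ENNReal.ofReal (∫ r in Set.Ioc (0:ℝ) (1/x),
            (x ^ 2 * Real.log x + (2 * x ^ 2 * (1/x) ^ ((1:ℝ)/2)) * r ^ (-(1/2):ℝ))) := by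
          apply lint_ofReal_eq measurableSet_Ioc
          · exact ((integrableOn_const_iff).2 (Or.inr (by
              rw [Real.volume_Ioc]; exact ENNReal.ofReal_lt_top))).add
              ((integrableOn_rpow_half ha0.le).const_mul _)
          · intro r hr
            have h1 := Real.rpow_nonneg hr.1.le (-(1/2):ℝ)
            have h2 := Real.rpow_nonneg ha0.le ((1:ℝ)/2)
            positivity
      _ ≤ ENNReal.ofReal (x * Real.log x + 4 * x) := by
          apply ENNReal.ofReal_le_ofReal
          rw [integral_add (IntegrableOn.integrable ((integrableOn_const_iff).2 (Or.inr (by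
              rw [Real.volume_Ioc]; exact ENNReal.ofReal_lt_top))))
            ((integrableOn_rpow_half ha0.le).const_mul _)]
          rw [setIntegral_const, integral_const_mul, integral_rpow_half le_rfl ha0.le]
          rw [Real.zero_rpow (by norm_num), measureReal_def, Real.volume_Ioc]
          rw [ENNReal.toReal_ofReal (by linarith), smul_eq_mul]
          have hrw : (1/x) ^ ((1:ℝ)/2) * (2 * (1/x) ^ ((1:ℝ)/2) - 2 * 0) =
              2 * ((1/x) ^ ((1:ℝ)/2) * (1/x) ^ ((1:ℝ)/2)) := by ring
          have hsq : (1/x) ^ ((1:ℝ)/2) * (1/x) ^ ((1:ℝ)/2) = 1/x := by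
            rw [← Real.rpow_add ha0]; norm_num
          have h1x : (1/x - 0) * (x^2 * Real.log x) = x * Real.log x := by
            field_simp; ring
          rw [sub_zero]
          calc 1/x * (x^2 * Real.log x) + 2 * x ^ 2 * (1/x) ^ ((1:ℝ)/2) *
                (2 * (1/x) ^ ((1:ℝ)/2) - 2 * 0) =
              1/x * (x^2 * Real.log x) + 4 * x ^ 2 * ((1/x) ^ ((1:ℝ)/2) * (1/x) ^ ((1:ℝ)/2)) := by
                ring
            _ ≤ x * Real.log x + 4 * x := le_of_eq (by rw [hsq]; field_simp)
  -- Part 2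
  have hpart2 : (∫⁻ r in Set.Ioc (1/x) 1, ENNReal.ofReal (cc r * gg r x)) ≤
      ENNReal.ofReal (x * (Real.log x ^ 2 / 2)) := by
    have hbound : ∀ r ∈ Set.Ioc (1/x) 1,
        ENNReal.ofReal (cc r * gg r x) ≤ ENNReal.ofReal (x * (-Real.log r / r)) := by
      intro r hr
      have hr0 : 0 < r := lt_trans ha0 hr.1
      have hrIoc : r ∈ Set.Ioc (0:ℝ) 1 := ⟨hr0, hr.2⟩
      apply ENNReal.ofReal_le_ofReal
      have h1 : gg r x ≤ r * x := gg_le_lin (mul_nonneg hr0.le hx0.le)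
      have h2 : cc r * gg r x ≤ cc r * (r * x) :=
        mul_le_mul_of_nonneg_left h1 (cc_nonneg hrIoc)
      have hrne : r ≠ 0 := hr0.ne'
      have h3 : cc r * (r * x) = x * (-Real.log r / r) := by
        unfold cc; field_simp
      linarith
    calc (∫⁻ r in Set.Ioc (1/x) 1, ENNReal.ofReal (cc r * gg r x)) ≤
        ∫⁻ r in Set.Ioc (1/x) 1, ENNReal.ofReal (x * (-Real.log r / r)) :=
          lintegral_mono_ae ((ae_restrict_iff' measurableSet_Ioc).2 (ae_of_all _ hbound))
      _ = ENNReal.ofReal (∫ r in Set.Ioc (1/x) 1, x * (-Real.log r / r)) := by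
          apply lint_ofReal_eq measurableSet_Ioc
          · exact (integrableOn_neglog_div ha0 ha1).const_mul _
          · intro r hr
            have hr0 : 0 < r := lt_trans ha0 hr.1
            have := Real.log_nonpos hr0.le hr.2
            have h1 : 0 ≤ -Real.log r / r := div_nonneg (by linarith) hr0.le
            positivity
      _ = ENNReal.ofReal (x * (Real.log x ^ 2 / 2)) := by
          rw [integral_const_mul, integral_neglog_div ha0 ha1]
          congr 1
          rw [one_div, Real.log_inv]
          ring
  calc FF x ≤ ENNReal.ofReal (x * Real.log x + 4 * x) +
      ENNReal.ofReal (x * (Real.log x ^ 2 / 2)) := by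
        rw [hFF]; exact add_le_add hpart1 hpart2
    _ = ENNReal.ofReal ((x * Real.log x + 4 * x) + x * (Real.log x ^ 2 / 2)) :=
        (ENNReal.ofReal_add (by nlinarith) (mul_nonneg hx0.le (by positivity))).symm
    _ ≤ ENNReal.ofReal (5 * x + x * Real.log x ^ 2) := by
        apply ENNReal.ofReal_le_ofReal
        nlinarith [sq_nonneg (Real.log x - 1)]

lemma FF_lower {x : ℝ} (hx : 4 ≤ x) :
    ENNReal.ofReal (x * Real.log x ^ 2 / 16) ≤ FF x := by
  have hx0 : (0:ℝ) < x := by linarith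
  have ha0 : (0:ℝ) < 2 / x := by positivity
  have ha1 : 2 / x ≤ 1 := by
    rw [div_le_one hx0]; linarith
  have hsub : Set.Ioc (2/x) 1 ⊆ Set.Ioc (0:ℝ) 1 :=
    Set.Ioc_subset_Ioc_left ha0.le
  have hlow : ∀ r ∈ Set.Ioc (2/x) 1,
      ENNReal.ofReal ((x/2) * (-Real.log r / r)) ≤ ENNReal.ofReal (cc r * gg r x) := by
    intro r hr
    have hr0 : 0 < r := lt_trans ha0 hr.1
    have hrIoc : r ∈ Set.Ioc (0:ℝ) 1 := ⟨hr0, hr.2⟩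
    apply ENNReal.ofReal_le_ofReal
    have hrx : 2 ≤ r * x := by
      have h := hr.1
      rw [div_lt_iff₀ hx0] at h
      linarith
    have h1 : r * x / 2 ≤ gg r x := gg_ge hrx
    have h2 : cc r * (r * x / 2) ≤ cc r * gg r x :=
      mul_le_mul_of_nonneg_left h1 (cc_nonneg hrIoc)
    have hrne : r ≠ 0 := hr0.ne'
    have h3 : cc r * (r * x / 2) = (x/2) * (-Real.log r / r) := by
      unfold cc; field_simp
    linarith
  have hstep : ENNReal.ofReal ((x/2) * (Real.log (2/x) ^ 2 / 2)) ≤ FF x := by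
    calc ENNReal.ofReal ((x/2) * (Real.log (2/x) ^ 2 / 2)) =
        ENNReal.ofReal (∫ r in Set.Ioc (2/x) 1, (x/2) * (-Real.log r / r)) := by
          rw [integral_const_mul, integral_neglog_div ha0 ha1]
      _ = ∫⁻ r in Set.Ioc (2/x) 1, ENNReal.ofReal ((x/2) * (-Real.log r / r)) := by
          rw [lint_ofReal_eq measurableSet_Ioc
            ((integrableOn_neglog_div ha0 ha1).const_mul _)]
          intro r hr
          have hr0 : 0 < r := lt_trans ha0 hr.1
          have := Real.log_nonpos hr0.le hr.2
          have h1 : 0 ≤ -Real.log r / r := div_nonneg (by linarith) hr0.le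
          positivity
      _ ≤ ∫⁻ r in Set.Ioc (2/x) 1, ENNReal.ofReal (cc r * gg r x) :=
          lintegral_mono_ae ((ae_restrict_iff' measurableSet_Ioc).2 (ae_of_all _ hlow))
      _ ≤ FF x := lintegral_mono' (Measure.restrict_mono hsub le_rfl) le_rfl
  refine le_trans (ENNReal.ofReal_le_ofReal ?_) hstep
  have hlog2 : Real.log (2/x) = Real.log 2 - Real.log x := Real.log_div (by norm_num) hx0.ne'
  have h4 : Real.log 4 ≤ Real.log x := Real.log_le_log (by norm_num) hx
  have h42 : Real.log 4 = 2 * Real.log 2 := by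
    rw [show (4:ℝ) = 2^2 by norm_num, Real.log_pow]; push_cast; ring
  have h2pos : 0 ≤ Real.log 2 := Real.log_nonneg (by norm_num)
  rw [hlog2]
  have hkey : (Real.log x / 2)^2 ≤ (Real.log 2 - Real.log x)^2 := by
    have h1 : 0 ≤ Real.log x / 2 := by linarith
    have h2 : Real.log x / 2 ≤ Real.log x - Real.log 2 := by linarith
    calc (Real.log x / 2)^2 ≤ (Real.log x - Real.log 2)^2 := by nlinarith
      _ = (Real.log 2 - Real.log x)^2 := by ring
  nlinarith [hkey, hx0.le]

end XAux

namespace XAux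
open scoped ENNReal

lemma gg_integrable (ν : Measure ℝ) (hν0 : ν (Set.Iic 0) = 0)
    (hν : ∫⁻ x, ENNReal.ofReal (min x (x ^ 2)) ∂ν ≠ ⊤)
    {r : ℝ} (hr : r ∈ Set.Ioc (0:ℝ) 1) : Integrable (fun x => gg r x) ν := by
  have hxpos : ∀ᵐ x ∂ν, 0 < x := by
    rw [ae_iff]
    have h : {x : ℝ | ¬ 0 < x} = Set.Iic 0 := by ext x; simp
    rw [h]; exact hν0
  have hcont : Continuous (fun x => gg r x) := by
    unfold gg
    continuity
  refine ⟨hcont.measurable.aestronglyMeasurable, ?_⟩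
  rw [hasFiniteIntegral_iff_ofReal (ae_of_all _ fun x => gg_nonneg r x)]
  have hb : ∀ᵐ x ∂ν, ENNReal.ofReal (gg r x) ≤ ENNReal.ofReal (min x (x^2)) := by
    filter_upwards [hxpos] with x hx
    apply ENNReal.ofReal_le_ofReal
    rcases le_or_gt x 1 with h1 | h1
    · have hg : gg r x ≤ (r * x)^2 := gg_le_sq (mul_nonneg hr.1.le hx.le)
      have hr2 : r^2 ≤ 1 := by nlinarith [hr.1.le, hr.2]
      have h2 : (r*x)^2 ≤ x^2 := by nlinarith [sq_nonneg x]
      rw [min_eq_right (by nlinarith : x^2 ≤ x)]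
      linarith
    · have hg : gg r x ≤ r * x := gg_le_lin (mul_nonneg hr.1.le hx.le)
      have h2 : r * x ≤ x := by nlinarith [hr.2]
      rw [min_eq_left (by nlinarith : x ≤ x^2)]
      linarith
  exact lt_of_le_of_lt (lintegral_mono_ae hb) (lt_top_iff_ne_top.2 hν)

end XAux

open XAux

/-- With `ψ₀(λ) = βλ² + ∫_{(0,∞)} (e^{-λx} - 1 + λx) ν(dx)`,
`∫_0^1 r^{-2} |log r| ψ₀(r) dr < ∞` if and only if
`∫_{[1,∞)} x (log x)² ν(dx) < ∞`. -/
theorem xlogx_squared_moment_iff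
    (β : ℝ) (hβ : 0 ≤ β)
    (ν : Measure ℝ) (hν0 : ν (Set.Iic 0) = 0)
    (hν : ∫⁻ x, ENNReal.ofReal (min x (x ^ 2)) ∂ν ≠ ⊤)
    (ψ₀ : ℝ → ℝ)
    (hψ₀ : ∀ l : ℝ, ψ₀ l = β * l ^ 2 + ∫ x, (Real.exp (-l * x) - 1 + l * x) ∂ν) :
    (∫⁻ r in Set.Ioc (0 : ℝ) 1, ENNReal.ofReal (|Real.log r| * ψ₀ r / r ^ 2) ≠ ⊤) ↔
    (∫⁻ x in Set.Ici (1 : ℝ), ENNReal.ofReal (x * Real.log x ^ 2) ∂ν ≠ ⊤) := by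
  haveI : SigmaFinite ν := XAux.sigmaFinite_of_moment ν hν0 hν
  have hxpos : ∀ᵐ x ∂ν, 0 < x := by
    rw [ae_iff]
    have h : {x : ℝ | ¬ 0 < x} = Set.Iic 0 := by ext x; simp
    rw [h]; exact hν0
  -- pointwise identity
  have hpt : ∀ r ∈ Set.Ioc (0:ℝ) 1,
      ENNReal.ofReal (|Real.log r| * ψ₀ r / r ^ 2) =
      ENNReal.ofReal (β * -Real.log r) + ∫⁻ x, ENNReal.ofReal (cc r * gg r x) ∂ν := by
    intro r hr
    have hr0 : 0 < r := hr.1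
    have hrne : r ≠ 0 := hr0.ne'
    have hlog : Real.log r ≤ 0 := Real.log_nonpos hr0.le hr.2
    have habs : |Real.log r| = -Real.log r := abs_of_nonpos hlog
    have hint : Integrable (fun x => gg r x) ν := gg_integrable ν hν0 hν hr
    have hI0 : 0 ≤ ∫ x, gg r x ∂ν := integral_nonneg fun x => gg_nonneg r x
    have hψ : ψ₀ r = β * r ^ 2 + ∫ x, gg r x ∂ν := by
      rw [hψ₀ r]
      congr 1
      simp only [gg, neg_mul]
    have halg : |Real.log r| * ψ₀ r / r ^ 2 =
        β * -Real.log r + cc r * ∫ x, gg r x ∂ν := by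
      rw [habs, hψ]; unfold cc; field_simp; ring
    rw [halg, ENNReal.ofReal_add (mul_nonneg hβ (by linarith)) (mul_nonneg (cc_nonneg hr) hI0)]
    congr 1
    rw [ENNReal.ofReal_mul (cc_nonneg hr),
      ofReal_integral_eq_lintegral_ofReal hint (ae_of_all _ (gg_nonneg r)),
      ← lintegral_const_mul' _ _ ENNReal.ofReal_ne_top]
    congr 1 with x
    rw [← ENNReal.ofReal_mul (cc_nonneg hr)]
  -- key splitting identity
  have hmeasβ : Measurable fun r : ℝ => ENNReal.ofReal (β * -Real.log r) :=
    (measurable_const.mul Real.measurable_log.neg).ennreal_ofReal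
  have hkey : (∫⁻ r in Set.Ioc (0:ℝ) 1, ENNReal.ofReal (|Real.log r| * ψ₀ r / r ^ 2))
      = (∫⁻ r in Set.Ioc (0:ℝ) 1, ENNReal.ofReal (β * -Real.log r)) + ∫⁻ x, FF x ∂ν := by
    rw [lintegral_congr_ae ((ae_restrict_iff' measurableSet_Ioc).2 (ae_of_all _ hpt)),
      lintegral_add_left hmeasβ]
    congr 1
    exact lintegral_lintegral_swap measurable_core.aemeasurable
  -- β term finite
  have hbeta : (∫⁻ r in Set.Ioc (0:ℝ) 1, ENNReal.ofReal (β * -Real.log r)) ≠ ⊤ := by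
    have hb : ∀ r ∈ Set.Ioc (0:ℝ) 1,
        ENNReal.ofReal (β * -Real.log r) ≤ ENNReal.ofReal ((2*β) * r ^ (-(1/2):ℝ)) := by
      intro r hr
      apply ENNReal.ofReal_le_ofReal
      have := neglog_le hr.1
      nlinarith [hβ]
    have hcalc : (∫⁻ r in Set.Ioc (0:ℝ) 1, ENNReal.ofReal (β * -Real.log r)) ≤
        ENNReal.ofReal (∫ r in Set.Ioc (0:ℝ) 1, (2*β) * r ^ (-(1/2):ℝ)) := by
      refine le_trans (lintegral_mono_ae ((ae_restrict_iff' measurableSet_Ioc).2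
        (ae_of_all _ hb))) (le_of_eq ?_)
      apply lint_ofReal_eq measurableSet_Ioc
      · exact (integrableOn_rpow_half zero_le_one).const_mul _
      · intro r hrr
        have := Real.rpow_nonneg hrr.1.le (-(1/2):ℝ)
        positivity
    exact ne_top_of_le_ne_top ENNReal.ofReal_ne_top hcalc
  constructor
  · -- forward
    intro hL
    rw [hkey] at hL
    have hFFfin : (∫⁻ x, FF x ∂ν) ≠ ⊤ := fun h => hL (by simp [h])
    have hsplit : Set.Ico (1:ℝ) 4 ∪ Set.Ici (4:ℝ) = Set.Ici (1:ℝ) :=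
      Set.Ico_union_Ici_eq_Ici (by norm_num)
    have hdisj : Disjoint (Set.Ico (1:ℝ) 4) (Set.Ici (4:ℝ)) := by
      rw [Set.disjoint_left]
      rintro x ⟨_, h2⟩ h3
      exact absurd h3 (not_le.mpr h2)
    rw [← hsplit, lintegral_union measurableSet_Ici hdisj]
    refine ENNReal.add_ne_top.2 ⟨?_, ?_⟩
    · -- Ico 1 4 part
      have hlog4 : Real.log 4 ≤ 2 := by
        have h4 : (4:ℝ) ≤ Real.exp 2 := by
          rw [show (2:ℝ) = 1 + 1 by norm_num, Real.exp_add]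
          nlinarith [Real.exp_one_gt_d9]
        calc Real.log 4 ≤ Real.log (Real.exp 2) := Real.log_le_log (by norm_num) h4
          _ = 2 := Real.log_exp 2
      have hb : ∀ x ∈ Set.Ico (1:ℝ) 4,
          ENNReal.ofReal (x * Real.log x ^ 2) ≤ ENNReal.ofReal (4 * min x (x^2)) := by
        intro x hx
        apply ENNReal.ofReal_le_ofReal
        have hx1 : (1:ℝ) ≤ x := hx.1
        have hlx : 0 ≤ Real.log x := Real.log_nonneg hx1
        have hlx4 : Real.log x ≤ 2 := le_trans (Real.log_le_log (by linarith) hx.2.le) hlog4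
        rw [min_eq_left (by nlinarith : x ≤ x^2)]
        have hsq : Real.log x ^ 2 ≤ 4 := by nlinarith
        nlinarith [hsq]
      have hcalc : (∫⁻ x in Set.Ico (1:ℝ) 4, ENNReal.ofReal (x * Real.log x ^ 2) ∂ν) < ⊤ :=
        calc (∫⁻ x in Set.Ico (1:ℝ) 4, ENNReal.ofReal (x * Real.log x ^ 2) ∂ν)
          ≤ ∫⁻ x in Set.Ico (1:ℝ) 4, ENNReal.ofReal (4 * min x (x^2)) ∂ν :=
            lintegral_mono_ae ((ae_restrict_iff' measurableSet_Ico).2 (ae_of_all _ hb))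
        _ ≤ ∫⁻ x, ENNReal.ofReal (4 * min x (x^2)) ∂ν :=
            lintegral_mono' Measure.restrict_le_self le_rfl
        _ = ENNReal.ofReal 4 * ∫⁻ x, ENNReal.ofReal (min x (x^2)) ∂ν := by
            rw [← lintegral_const_mul' _ _ ENNReal.ofReal_ne_top]
            congr 1 with x
            rw [← ENNReal.ofReal_mul (by norm_num)]
        _ < ⊤ := ENNReal.mul_lt_top ENNReal.ofReal_lt_top (lt_top_iff_ne_top.2 hν)
      exact hcalc.ne
    · -- Ici 4 part
      have hb : ∀ x ∈ Set.Ici (4:ℝ),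
          ENNReal.ofReal (x * Real.log x ^ 2) ≤ ENNReal.ofReal 16 * FF x := by
        intro x hx
        have h16 : ENNReal.ofReal (x * Real.log x ^ 2) =
            ENNReal.ofReal 16 * ENNReal.ofReal (x * Real.log x ^ 2 / 16) := by
          rw [← ENNReal.ofReal_mul (by norm_num)]
          congr 1
          ring
        rw [h16]
        exact mul_le_mul_right (FF_lower hx) _
      have hcalc : (∫⁻ x in Set.Ici (4:ℝ), ENNReal.ofReal (x * Real.log x ^ 2) ∂ν) < ⊤ :=
        calc (∫⁻ x in Set.Ici (4:ℝ), ENNReal.ofReal (x * Real.log x ^ 2) ∂ν)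
          ≤ ∫⁻ x in Set.Ici (4:ℝ), ENNReal.ofReal 16 * FF x ∂ν :=
            lintegral_mono_ae ((ae_restrict_iff' measurableSet_Ici).2 (ae_of_all _ hb))
        _ ≤ ∫⁻ x, ENNReal.ofReal 16 * FF x ∂ν :=
            lintegral_mono' Measure.restrict_le_self le_rfl
        _ = ENNReal.ofReal 16 * ∫⁻ x, FF x ∂ν :=
            lintegral_const_mul' _ _ ENNReal.ofReal_ne_top
        _ < ⊤ := ENNReal.mul_lt_top ENNReal.ofReal_lt_top (lt_top_iff_ne_top.2 hFFfin)
      exact hcalc.ne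
  · -- reverse
    intro hR
    have hFFle : ∀ᵐ x ∂ν, FF x ≤ ENNReal.ofReal (5 * min x (x^2)) +
        (Set.Ici (1:ℝ)).indicator (fun x => ENNReal.ofReal (x * Real.log x ^ 2)) x := by
      filter_upwards [hxpos] with x hx
      rcases le_or_gt x 1 with h1 | h1
      · have hup := FF_upper_small ⟨hx, h1⟩
        have hmin : min x (x^2) = x^2 := min_eq_right (by nlinarith)
        refine le_trans hup (le_trans (ENNReal.ofReal_le_ofReal ?_) le_self_add)
        rw [hmin]; nlinarith
      · have hup := FF_upper_large h1.le
        have hmin : min x (x^2) = x := min_eq_left (by nlinarith)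
        rw [Set.indicator_of_mem (by exact h1.le : x ∈ Set.Ici (1:ℝ)), hmin]
        refine le_trans hup (le_of_eq ?_)
        rw [← ENNReal.ofReal_add (by nlinarith) (by positivity)]
    have hfirst : (∫⁻ x, ENNReal.ofReal (5 * min x (x^2)) ∂ν) ≠ ⊤ := by
      have : (∫⁻ x, ENNReal.ofReal (5 * min x (x^2)) ∂ν) =
          ENNReal.ofReal 5 * ∫⁻ x, ENNReal.ofReal (min x (x^2)) ∂ν := by
        rw [← lintegral_const_mul' _ _ ENNReal.ofReal_ne_top]
        congr 1 with x
        rw [← ENNReal.ofReal_mul (by norm_num)]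
      rw [this]
      exact ENNReal.mul_ne_top ENNReal.ofReal_ne_top hν
    have hsecond : (∫⁻ x, (Set.Ici (1:ℝ)).indicator
        (fun x => ENNReal.ofReal (x * Real.log x ^ 2)) x ∂ν) ≠ ⊤ := by
      rw [lintegral_indicator measurableSet_Ici]
      exact hR
    have hFFfin : (∫⁻ x, FF x ∂ν) ≠ ⊤ := by
      refine ne_top_of_le_ne_top ?_ (lintegral_mono_ae hFFle)
      rw [lintegral_add_left (by fun_prop)]
      exact ENNReal.add_ne_top.2 ⟨hfirst, hsecond⟩
    rw [hkey]
    exact ENNReal.add_ne_top.2 ⟨hbeta, hFFfin⟩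
end

section
/- Define ψ₂(λ) = λ (λ log λ - λ + 1) / (log λ)² for λ ∈ (0,1). Then (a) ∫_2^∞ (∫_2^ξ g(u) du)^{-1/2} dξ < ∞, where g(u) = u (u log u - u + 1)/(log u)² for u > 1; (b) ∫_0^{1/2} r^{-2} ψ₂(r) dr < ∞; and (c) ∫_0^{1/2} r^{-2} |log r| ψ₂(r) dr = ∞. -/
open MeasureTheory Real Set Filter


lemma contG : ContinuousOn (fun r : ℝ => -(Real.log r)⁻¹) (Icc (0:ℝ) (1/2)) := by
  intro x hx
  rcases eq_or_lt_of_le hx.1 with h0 | h0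
  · subst h0
    have hneg : Tendsto (fun r : ℝ => -Real.log r) (nhdsWithin 0 (Ioi 0)) atTop :=
      tendsto_neg_atBot_atTop.comp Real.tendsto_log_nhdsGT_zero
    have h1 : Tendsto (fun r : ℝ => -(Real.log r)⁻¹) (nhdsWithin 0 (Ioi 0)) (nhds 0) := by
      refine Tendsto.congr (fun r => ?_) hneg.inv_tendsto_atTop
      exact inv_neg
    have h2 : Tendsto (fun r : ℝ => -(Real.log r)⁻¹) (pure (0:ℝ)) (nhds 0) := by
      simpa [Real.log_zero] using tendsto_pure_nhds (fun r : ℝ => -(Real.log r)⁻¹) 0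
    have : ContinuousWithinAt (fun r : ℝ => -(Real.log r)⁻¹) (Ici 0) 0 := by
      unfold ContinuousWithinAt
      rw [← Set.Ioi_insert, nhdsWithin_insert]
      simpa [Real.log_zero] using h2.sup h1
    exact this.mono Icc_subset_Ici_self
  · have hlog : Real.log x ≠ 0 := by
      have : Real.log x < 0 := Real.log_neg h0 (by linarith [hx.2])
      linarith
    exact (((Real.continuousAt_log h0.ne').inv₀ hlog).neg).continuousWithinAt

lemma majorant_int : IntegrableOn (fun r : ℝ => 1/(r * (Real.log r)^2)) (Ioc (0:ℝ) (1/2)) volume := by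
  apply intervalIntegral.integrableOn_deriv_of_nonneg contG
  · intro x hx
    have hx0 : x ≠ 0 := hx.1.ne'
    have hlog : Real.log x ≠ 0 := by
      have : Real.log x < 0 := Real.log_neg hx.1 (by linarith [hx.2])
      linarith
    have h1 : HasDerivAt (fun r : ℝ => (Real.log r)⁻¹) (-(x⁻¹)/(Real.log x)^2) x := by
      simpa using (Real.hasDerivAt_log hx0).fun_inv hlog
    refine h1.neg.congr_deriv ?_
    field_simp
  · intro x hx
    apply div_nonneg one_pos.le
    have := hx.1
    positivity

lemma partb (ψ₂ : ℝ → ℝ)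
    (hψ₂ : ∀ l : ℝ, 0 < l → l < 1 →
      ψ₂ l = l * (l * Real.log l - l + 1) / (Real.log l) ^ 2) :
    (∫⁻ r in Set.Ioc (0 : ℝ) (1 / 2), ENNReal.ofReal (ψ₂ r / r ^ 2) ≠ ⊤) := by
  have hmono : (∫⁻ r in Set.Ioc (0 : ℝ) (1 / 2), ENNReal.ofReal (ψ₂ r / r ^ 2)) ≤
      ∫⁻ r in Set.Ioc (0 : ℝ) (1 / 2), ENNReal.ofReal (1/(r * (Real.log r)^2)) := by
    apply setLIntegral_mono' measurableSet_Ioc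
    intro r hr
    apply ENNReal.ofReal_le_ofReal
    have hr0 : 0 < r := hr.1
    have hr1 : r < 1 := by linarith [hr.2]
    have hlog : Real.log r < 0 := Real.log_neg hr0 hr1
    have hl2 : (0:ℝ) < (Real.log r)^2 := by nlinarith
    have heq : ψ₂ r / r ^ 2 = (r * Real.log r - r + 1) / (r * (Real.log r)^2) := by
      rw [hψ₂ r hr0 hr1, div_div, div_eq_div_iff (by positivity) (by positivity)]
      ring
    rw [heq]
    apply (div_le_div_iff_of_pos_right (by positivity)).mpr
    nlinarith
  have hfin : (∫⁻ r in Set.Ioc (0 : ℝ) (1 / 2), ENNReal.ofReal (1/(r * (Real.log r)^2))) < ⊤ := by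
    have h0 : (0:ℝ → ℝ) ≤ᶠ[ae (volume.restrict (Set.Ioc (0:ℝ) (1/2)))]
        (fun r : ℝ => 1/(r * (Real.log r)^2)) := by
      refine (ae_restrict_iff' measurableSet_Ioc).2 (Filter.Eventually.of_forall fun r hr => ?_)
      have := hr.1
      positivity
    exact (hasFiniteIntegral_iff_ofReal h0).1 majorant_int.hasFiniteIntegral
  exact (lt_of_le_of_lt hmono hfin).ne


lemma Nlb {r : ℝ} (hr0 : 0 < r) (hr : r ≤ 1/16) : (1/4:ℝ) ≤ r * Real.log r - r + 1 := by
  have hs : 0 < Real.sqrt r := Real.sqrt_pos.2 hr0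
  have h1 : Real.log r = 2 * Real.log (Real.sqrt r) := by
    rw [Real.log_sqrt hr0.le]; ring
  have h2 : 1 - (Real.sqrt r)⁻¹ ≤ Real.log (Real.sqrt r) := by
    have := Real.log_le_sub_one_of_pos (inv_pos.2 hs)
    rw [Real.log_inv] at this
    linarith
  have h3 : r * (Real.sqrt r)⁻¹ = Real.sqrt r := by
    rw [mul_inv_eq_iff_eq_mul₀ hs.ne', Real.mul_self_sqrt hr0.le]
  have h4 : Real.sqrt r ≤ 1/4 := by
    have h := Real.sqrt_le_sqrt hr
    rw [show (1/16:ℝ) = (1/4)^2 by norm_num, Real.sqrt_sq (by norm_num : (0:ℝ) ≤ 1/4)] at h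
    exact h
  have h5 : 2*r - 2*Real.sqrt r ≤ r * Real.log r := by
    have := mul_le_mul_of_nonneg_left h2 hr0.le
    calc 2*r - 2*Real.sqrt r = 2 * (r * (1 - (Real.sqrt r)⁻¹)) := by
          rw [mul_sub, mul_one, h3]; ring
      _ ≤ 2 * (r * Real.log (Real.sqrt r)) := by linarith
      _ = r * Real.log r := by rw [h1]; ring
  nlinarith

lemma h0_deriv {x : ℝ} (hx0 : 0 < x) (hx1 : x < 1) :
    HasDerivAt (fun r : ℝ => -Real.log (-Real.log r)) ((x * (-Real.log x))⁻¹) x := by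
  have hl : Real.log x < 0 := Real.log_neg hx0 hx1
  have h1 : HasDerivAt (fun r : ℝ => -Real.log r) (-x⁻¹) x := (Real.hasDerivAt_log hx0.ne').neg
  have h2 : HasDerivAt (fun r : ℝ => Real.log (-Real.log r)) ((-Real.log x)⁻¹ * -x⁻¹) x :=
    (h1.log (by linarith : -Real.log x ≠ 0)).congr_deriv (by ring)
  refine h2.neg.congr_deriv ?_
  rw [mul_inv]
  ring

lemma c_cont {a b : ℝ} (ha : 0 < a) (hb : b < 1) :
    ContinuousOn (fun r : ℝ => (r * (-Real.log r))⁻¹) (Icc a b) := by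
  intro x hx
  have hx0 : 0 < x := lt_of_lt_of_le ha hx.1
  have hl : Real.log x < 0 := Real.log_neg hx0 (lt_of_le_of_lt hx.2 hb)
  have hne : x * (-Real.log x) ≠ 0 := (mul_pos hx0 (by linarith)).ne'
  exact (((continuousAt_id.mul (Real.continuousAt_log hx0.ne').neg).inv₀ hne)).continuousWithinAt

lemma c_int (ε : ℝ) (hε0 : 0 < ε) (hε : ε < 1/16) :
    ∫ r in ε..(1/16:ℝ), (r * (-Real.log r))⁻¹
      = Real.log (-Real.log ε) - Real.log (Real.log 16) := by
  have huIcc : Set.uIcc ε (1/16:ℝ) = Icc ε (1/16) := uIcc_of_le hε.le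
  have hint : IntervalIntegrable (fun r : ℝ => (r * (-Real.log r))⁻¹) volume ε (1/16) := by
    apply ContinuousOn.intervalIntegrable
    rw [huIcc]
    exact c_cont hε0 (by norm_num)
  have hd : ∀ x ∈ Set.uIcc ε (1/16:ℝ),
      HasDerivAt (fun r : ℝ => -Real.log (-Real.log r)) ((x * (-Real.log x))⁻¹) x := by
    intro x hx
    rw [huIcc] at hx
    exact h0_deriv (lt_of_lt_of_le hε0 hx.1) (by linarith [hx.2])
  rw [intervalIntegral.integral_eq_sub_of_hasDerivAt hd hint]
  rw [show -Real.log (1/16 : ℝ) = Real.log 16 by rw [one_div, Real.log_inv]; ring]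
  ring

lemma partc (ψ₂ : ℝ → ℝ)
    (hψ₂ : ∀ l : ℝ, 0 < l → l < 1 →
      ψ₂ l = l * (l * Real.log l - l + 1) / (Real.log l) ^ 2) :
    (∫⁻ r in Set.Ioc (0 : ℝ) (1 / 2),
        ENNReal.ofReal (|Real.log r| * ψ₂ r / r ^ 2) = ⊤) := by
  have key : ∀ ε : ℝ, 0 < ε → ε < 1/16 →
      ENNReal.ofReal ((1/4) * (Real.log (-Real.log ε) - Real.log (Real.log 16))) ≤
      ∫⁻ r in Set.Ioc (0 : ℝ) (1 / 2), ENNReal.ofReal (|Real.log r| * ψ₂ r / r ^ 2) := by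
    intro ε hε0 hε
    have hsub : Set.Ioc ε (1/16 : ℝ) ⊆ Set.Ioc (0:ℝ) (1/2) := by
      intro x hx; exact ⟨lt_trans hε0 hx.1, by linarith [hx.2]⟩
    have hcont : ContinuousOn (fun r : ℝ => (r * (-Real.log r))⁻¹) (Set.uIcc ε (1/16:ℝ)) := by
      rw [uIcc_of_le hε.le]; exact c_cont hε0 (by norm_num)
    have hIntOn : IntegrableOn (fun r : ℝ => (1/4) * (r * (-Real.log r))⁻¹)
        (Set.Ioc ε (1/16:ℝ)) volume := by
      have h : IntervalIntegrable (fun r : ℝ => (r * (-Real.log r))⁻¹) volume ε (1/16) :=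
        hcont.intervalIntegrable
      exact h.1.const_mul _
    calc ENNReal.ofReal ((1/4) * (Real.log (-Real.log ε) - Real.log (Real.log 16)))
        = ∫⁻ r in Set.Ioc ε (1/16:ℝ),
            ENNReal.ofReal ((1/4) * (r * (-Real.log r))⁻¹) := by
          rw [← ofReal_integral_eq_lintegral_ofReal hIntOn]
          · congr 1
            rw [← intervalIntegral.integral_of_le hε.le,
              intervalIntegral.integral_const_mul, c_int ε hε0 hε]
          · refine (ae_restrict_iff' measurableSet_Ioc).2
              (Filter.Eventually.of_forall fun r hr => ?_)
            have hr0 : 0 < r := lt_trans hε0 hr.1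
            have hl : Real.log r < 0 := Real.log_neg hr0 (by linarith [hr.2])
            have hp : (0:ℝ) < r * -Real.log r := mul_pos hr0 (by linarith)
            positivity
      _ ≤ ∫⁻ r in Set.Ioc ε (1/16:ℝ),
            ENNReal.ofReal (|Real.log r| * ψ₂ r / r ^ 2) := by
          apply setLIntegral_mono' measurableSet_Ioc
          intro r hr
          apply ENNReal.ofReal_le_ofReal
          have hr0 : 0 < r := lt_trans hε0 hr.1
          have hr16 : r ≤ 1/16 := hr.2
          have hl : Real.log r < 0 := Real.log_neg hr0 (by linarith)
          have heq : |Real.log r| * ψ₂ r / r ^ 2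
              = (r * Real.log r - r + 1) * (r * (-Real.log r))⁻¹ := by
            rw [hψ₂ r hr0 (by linarith), abs_of_neg hl]
            have h2 : (0:ℝ) < (Real.log r)^2 := by nlinarith
            field_simp [hr0.ne', hl.ne]
          rw [heq]
          have hp : (0:ℝ) < r * -Real.log r := mul_pos hr0 (by linarith)
          exact mul_le_mul_of_nonneg_right (Nlb hr0 hr16) (by positivity)
      _ ≤ _ := lintegral_mono_set hsub
  apply ENNReal.eq_top_of_forall_nnreal_le
  intro c
  set M : ℝ := 4*c + 3 with hM
  have hM3 : (3:ℝ) ≤ M := by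
    have : (0:ℝ) ≤ (c:ℝ) := c.2
    linarith
  have hlog16 : Real.log 16 = 4 * Real.log 2 := by
    rw [show (16:ℝ) = 2^4 by norm_num, Real.log_pow]; norm_num
  have hlog16' : Real.log 16 < 4 := by
    rw [hlog16]; nlinarith [Real.log_two_lt_d9]
  have hlog16pos : 0 < Real.log 16 := Real.log_pos (by norm_num)
  set ε : ℝ := Real.exp (-Real.exp M) with hε
  have hε0 : 0 < ε := Real.exp_pos _
  have hexpM : (4:ℝ) ≤ Real.exp M := by
    have := Real.add_one_le_exp M
    linarith
  have hε16 : ε < 1/16 := by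
    rw [hε, show (1/16:ℝ) = Real.exp (Real.log (1/16)) by
      rw [Real.exp_log]; norm_num]
    apply Real.exp_lt_exp.2
    rw [one_div, Real.log_inv]
    linarith
  have hval : -Real.log ε = Real.exp M := by
    rw [hε, Real.log_exp]; ring
  have := key ε hε0 hε16
  rw [hval, Real.log_exp] at this
  refine le_trans ?_ this
  rw [← ENNReal.ofReal_coe_nnreal]
  apply ENNReal.ofReal_le_ofReal
  have hll : Real.log (Real.log 16) ≤ 3 := by
    have := Real.log_le_sub_one_of_pos hlog16pos
    linarith
  rw [hM]
  linarith


section parta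
variable {g : ℝ → ℝ}
  (hg : ∀ u : ℝ, 1 < u → g u = u * (u * Real.log u - u + 1) / (Real.log u) ^ 2)
include hg

omit hg in
lemma aN_lb {u : ℝ} (hu : 2 ≤ u) : u * Real.log 2 - 1 ≤ u * Real.log u - u + 1 := by
  have hu0 : (0:ℝ) < u := by linarith
  have h2 : Real.log ((u/2)⁻¹) ≤ (u/2)⁻¹ - 1 := Real.log_le_sub_one_of_pos (by positivity)
  rw [Real.log_inv, show (u/2)⁻¹ = 2/u by rw [inv_div]] at h2
  have h : 1 - 2/u ≤ Real.log (u/2) := by linarith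
  have hlog : Real.log (u/2) = Real.log u - Real.log 2 :=
    Real.log_div (by linarith) two_ne_zero
  have hmul : u * (1 - 2/u) ≤ u * Real.log (u/2) := mul_le_mul_of_nonneg_left h hu0.le
  have hcanc : u * (2/u) = 2 := by field_simp
  rw [hlog] at hmul
  nlinarith

omit hg in
lemma alog16 : Real.log 16 = 4 * Real.log 2 := by
  rw [show (16:ℝ) = 2^4 by norm_num, Real.log_pow]; norm_num

lemma ag_lb16 {u : ℝ} (hu : u ∈ Icc (2:ℝ) 16) : (1/16:ℝ) ≤ g u := by
  have hu2 : 2 ≤ u := hu.1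
  have hu0 : (0:ℝ) < u := by linarith
  have hN : (1/4:ℝ) ≤ u * Real.log u - u + 1 := by
    have := aN_lb hu2
    nlinarith [Real.log_two_gt_d9]
  have hl0 : 0 ≤ Real.log u := Real.log_nonneg (by linarith)
  have hlu : Real.log u ≤ Real.log 16 := Real.log_le_log hu0 hu.2
  have hl16 : Real.log 16 < 2.7726 := by
    rw [alog16]; nlinarith [Real.log_two_lt_d9]
  have hsq : (Real.log u)^2 ≤ 8 := by nlinarith
  have hlpos : (0:ℝ) < (Real.log u)^2 := by
    have : 0 < Real.log u := Real.log_pos (by linarith)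
    positivity
  rw [hg u (by linarith)]
  calc (1/16:ℝ) = (1/2)/8 := by norm_num
    _ ≤ u * (u * Real.log u - u + 1) / (Real.log u)^2 :=
      div_le_div₀ (by nlinarith) (by nlinarith) hlpos hsq

lemma ag_pos {u : ℝ} (hu : 2 ≤ u) : 0 < g u := by
  have hu0 : (0:ℝ) < u := by linarith
  have hN : (0:ℝ) < u * Real.log u - u + 1 := by
    have := aN_lb hu
    nlinarith [Real.log_two_gt_d9]
  have hlpos : (0:ℝ) < (Real.log u)^2 := by
    have : 0 < Real.log u := Real.log_pos (by linarith)
    positivity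
  rw [hg u (by linarith)]
  positivity

lemma ag_hi {u : ℝ} (hu : 8 ≤ u) : u * Real.sqrt u / 16 ≤ g u := by
  have hu0 : (0:ℝ) < u := by linarith
  have hl2 : (2:ℝ) ≤ Real.log u := by
    have h8 : Real.log 8 ≤ Real.log u := Real.log_le_log (by norm_num) hu
    have : Real.log 8 = 3 * Real.log 2 := by
      rw [show (8:ℝ) = 2^3 by norm_num, Real.log_pow]; norm_num
    nlinarith [Real.log_two_gt_d9]
  have hrp : (0:ℝ) < u ^ ((1:ℝ)/4) := Real.rpow_pos_of_pos hu0 _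
  have hl4 : Real.log u ≤ 4 * u ^ ((1:ℝ)/4) := by
    have h := Real.log_le_sub_one_of_pos hrp
    rw [Real.log_rpow hu0] at h
    linarith
  have hrsq : (u ^ ((1:ℝ)/4))^2 = Real.sqrt u := by
    rw [← Real.rpow_natCast (u ^ ((1:ℝ)/4)) 2, ← Real.rpow_mul hu0.le,
      Real.sqrt_eq_rpow]
    norm_num
  have hq : (Real.log u)^2 ≤ 16 * Real.sqrt u := by nlinarith
  have hN : u ≤ u * Real.log u - u + 1 := by nlinarith
  have hnum : u^2 ≤ u * (u * Real.log u - u + 1) := by nlinarith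
  have hsp : (0:ℝ) < Real.sqrt u := Real.sqrt_pos.2 hu0
  have hlpos : (0:ℝ) < (Real.log u)^2 := by positivity
  rw [hg u (by linarith)]
  calc u * Real.sqrt u / 16 = u^2 / (16 * Real.sqrt u) := by
        rw [div_eq_div_iff (by norm_num) (by positivity)]
        nlinarith [Real.mul_self_sqrt hu0.le]
    _ ≤ u * (u * Real.log u - u + 1) / (Real.log u)^2 :=
      div_le_div₀ (by nlinarith) hnum hlpos hq

lemma ag_cont : ContinuousOn g (Ici (2:ℝ)) := by
  apply ContinuousOn.congr
    (f := fun u : ℝ => u * (u * Real.log u - u + 1) / (Real.log u) ^ 2)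
  · intro x hx
    have hx0 : (0:ℝ) < x := by have := hx; simp only [mem_Ici] at this; linarith
    have hl : Real.log x ≠ 0 := by
      have : 0 < Real.log x := Real.log_pos (by simp only [mem_Ici] at hx; linarith)
      linarith
    have hca : ContinuousAt (fun u : ℝ => u * (u * Real.log u - u + 1) / (Real.log u) ^ 2) x := by
      have hlc : ContinuousAt Real.log x := Real.continuousAt_log hx0.ne'
      exact ContinuousAt.div (by fun_prop) (by fun_prop) (by positivity)
    exact hca.continuousWithinAt
  · intro x hx
    exact hg x (by simp only [mem_Ici] at hx; linarith)

lemma ag_ii {a b : ℝ} (ha : 2 ≤ a) (hab : a ≤ b) : IntervalIntegrable g volume a b := by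
  apply ContinuousOn.intervalIntegrable
  rw [uIcc_of_le hab]
  exact (ag_cont hg).mono (fun x hx => le_trans ha hx.1)

lemma aI_low {ξ : ℝ} (hξ : ξ ∈ Ioc (2:ℝ) 16) : (ξ - 2)/16 ≤ ∫ u in (2:ℝ)..ξ, g u := by
  have h := intervalIntegral.integral_mono_on (μ := volume) hξ.1.le
    (intervalIntegrable_const (c := (1/16:ℝ))) (ag_ii hg le_rfl hξ.1.le)
    (fun x hx => ag_lb16 hg ⟨hx.1, le_trans hx.2 hξ.2⟩)
  rw [intervalIntegral.integral_const] at h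
  calc (ξ - 2)/16 = (ξ - 2) • (1/16:ℝ) := by rw [smul_eq_mul]; ring
    _ ≤ _ := h

lemma aI_high {ξ : ℝ} (hξ : 16 ≤ ξ) : ξ ^ ((5:ℝ)/2) / 96 ≤ ∫ u in (2:ℝ)..ξ, g u := by
  have hξ0 : (0:ℝ) < ξ := by linarith
  have h2 : (2:ℝ) ≤ ξ/2 := by linarith
  have h8 : (8:ℝ) ≤ ξ/2 := by linarith
  have hsplit : ∫ u in (2:ℝ)..ξ, g u
      = (∫ u in (2:ℝ)..(ξ/2), g u) + ∫ u in (ξ/2)..ξ, g u :=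
    (intervalIntegral.integral_add_adjacent_intervals
      (ag_ii hg le_rfl h2) (ag_ii hg h2 (by linarith))).symm
  have h1 : 0 ≤ ∫ u in (2:ℝ)..(ξ/2), g u :=
    intervalIntegral.integral_nonneg h2 (fun u hu => (ag_pos hg hu.1).le)
  set c : ℝ := (ξ/2) * Real.sqrt (ξ/2) / 16 with hc
  have h3 : (ξ - ξ/2) • c ≤ ∫ u in (ξ/2)..ξ, g u := by
    have := intervalIntegral.integral_mono_on (μ := volume) (by linarith : ξ/2 ≤ ξ)
      (intervalIntegrable_const (c := c)) (ag_ii hg (by linarith) (by linarith))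
      (fun x hx => ?_)
    · rw [intervalIntegral.integral_const] at this; exact this
    · have hx8 : 8 ≤ x := le_trans h8 hx.1
      refine le_trans ?_ (ag_hi hg hx8)
      rw [hc]
      have hs : Real.sqrt (ξ/2) ≤ Real.sqrt x := Real.sqrt_le_sqrt hx.1
      have : (ξ/2) * Real.sqrt (ξ/2) ≤ x * Real.sqrt x := by
        apply mul_le_mul hx.1 hs (Real.sqrt_nonneg _) (by linarith)
      linarith
  -- now the arithmetic: (ξ - ξ/2) • c = (ξ/2)^(5/2)/16 ≥ ξ^(5/2)/96
  have ht0 : (0:ℝ) < ξ/2 := by linarith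
  have hpow : (ξ/2) ^ ((5:ℝ)/2) = (ξ/2)^2 * Real.sqrt (ξ/2) := by
    rw [show ((5:ℝ)/2) = 2 + 1/2 by norm_num, Real.rpow_add ht0,
      Real.sqrt_eq_rpow, show ((2:ℝ)) = ((2:ℕ):ℝ) by norm_num, Real.rpow_natCast]
  have hsmul : (ξ - ξ/2) • c = (ξ/2) ^ ((5:ℝ)/2) / 16 := by
    rw [smul_eq_mul, hc, hpow]; ring
  have hdiv : ξ ^ ((5:ℝ)/2) / 96 ≤ (ξ/2) ^ ((5:ℝ)/2) / 16 := by
    have hdr : (ξ/2) ^ ((5:ℝ)/2) = ξ ^ ((5:ℝ)/2) / 2 ^ ((5:ℝ)/2) :=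
      Real.div_rpow hξ0.le (by norm_num) _
    have h2pow : (2:ℝ) ^ ((5:ℝ)/2) ≤ 6 := by
      rw [show ((5:ℝ)/2) = 2 + 1/2 by norm_num, Real.rpow_add (by norm_num : (0:ℝ) < 2),
        ← Real.sqrt_eq_rpow, show ((2:ℝ)) = ((2:ℕ):ℝ) by norm_num, Real.rpow_natCast]
      push_cast
      nlinarith [Real.sq_sqrt (by norm_num : (0:ℝ) ≤ 2), Real.sqrt_nonneg 2]
    have h2p0 : (0:ℝ) < 2 ^ ((5:ℝ)/2) := Real.rpow_pos_of_pos (by norm_num) _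
    rw [hdr, div_div]
    exact div_le_div_of_nonneg_left (Real.rpow_nonneg hξ0.le _) (by positivity)
      (by nlinarith)
  rw [hsplit]
  calc ξ ^ ((5:ℝ)/2) / 96 ≤ (ξ/2) ^ ((5:ℝ)/2) / 16 := hdiv
    _ = (ξ - ξ/2) • c := hsmul.symm
    _ ≤ ∫ u in (ξ/2)..ξ, g u := h3
    _ ≤ _ := by linarith

end parta

lemma fin_of_bound {s : Set ℝ} (hs : MeasurableSet s) {f h : ℝ → ℝ}
    (hle : ∀ x ∈ s, f x ≤ h x) (hh : IntegrableOn h s volume)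
    (hh0 : ∀ x ∈ s, 0 ≤ h x) :
    (∫⁻ x in s, ENNReal.ofReal (f x)) ≠ ⊤ := by
  have h1 : (∫⁻ x in s, ENNReal.ofReal (f x)) ≤ ∫⁻ x in s, ENNReal.ofReal (h x) :=
    setLIntegral_mono' hs (fun x hx => ENNReal.ofReal_le_ofReal (hle x hx))
  have h2 : (∫⁻ x in s, ENNReal.ofReal (h x)) < ⊤ := by
    have h0 : (0:ℝ → ℝ) ≤ᶠ[ae (volume.restrict s)] h :=
      (ae_restrict_iff' hs).2 (Filter.Eventually.of_forall hh0)
    exact (hasFiniteIntegral_iff_ofReal h0).1 hh.hasFiniteIntegral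
  exact (lt_of_le_of_lt h1 h2).ne

lemma parta {g : ℝ → ℝ}
    (hg : ∀ u : ℝ, 1 < u → g u = u * (u * Real.log u - u + 1) / (Real.log u) ^ 2) :
    (∫⁻ ξ in Set.Ici (2 : ℝ),
        ENNReal.ofReal ((Real.sqrt (∫ u in (2 : ℝ)..ξ, g u))⁻¹) ≠ ⊤) := by
  rw [← setLIntegral_congr (Ioi_ae_eq_Ici (a := (2:ℝ)))]
  rw [← Ioc_union_Ioi_eq_Ioi (by norm_num : (2:ℝ) ≤ 16),
    lintegral_union measurableSet_Ioi Set.Ioc_disjoint_Ioi_same]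
  have h16 : Real.sqrt 16 = 4 := by
    rw [show (16:ℝ) = 4^2 by norm_num, Real.sqrt_sq (by norm_num : (0:ℝ) ≤ 4)]
  have P1 : (∫⁻ ξ in Set.Ioc (2:ℝ) 16,
      ENNReal.ofReal ((Real.sqrt (∫ u in (2 : ℝ)..ξ, g u))⁻¹)) ≠ ⊤ := by
    apply fin_of_bound measurableSet_Ioc
      (h := fun ξ => 4 * (ξ - 2) ^ (-(1/2) : ℝ))
    · intro ξ hξ
      have hI := aI_low hg hξ
      have hξ2 : (0:ℝ) < ξ - 2 := by linarith [hξ.1]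
      have h1 : Real.sqrt (ξ - 2) / 4 ≤ Real.sqrt (∫ u in (2:ℝ)..ξ, g u) := by
        have h := Real.sqrt_le_sqrt hI
        rwa [Real.sqrt_div hξ2.le, h16] at h
      have hsp : (0:ℝ) < Real.sqrt (ξ - 2) := Real.sqrt_pos.2 hξ2
      have h2 : (Real.sqrt (∫ u in (2:ℝ)..ξ, g u))⁻¹ ≤ (Real.sqrt (ξ - 2) / 4)⁻¹ :=
        inv_anti₀ (by positivity) h1
      refine h2.trans (le_of_eq ?_)
      rw [Real.rpow_neg hξ2.le, ← Real.sqrt_eq_rpow]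
      field_simp
    · have h := (intervalIntegral.intervalIntegrable_rpow' (a := 0) (b := 14)
        (show (-1:ℝ) < -(1/2) by norm_num)).comp_sub_right 2
      norm_num at h
      have : IntegrableOn (fun x : ℝ => (x - 2) ^ (-(1/2) : ℝ)) (Ioc 2 16) volume := by
        have := h.1
        simpa [show (-1/2 : ℝ) = -(1/2) by norm_num] using this
      exact this.const_mul 4
    · intro ξ hξ
      have hξ2 : (0:ℝ) < ξ - 2 := by linarith [hξ.1]
      positivity
  have P2 : (∫⁻ ξ in Set.Ioi (16:ℝ),
      ENNReal.ofReal ((Real.sqrt (∫ u in (2 : ℝ)..ξ, g u))⁻¹)) ≠ ⊤ := by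
    apply fin_of_bound measurableSet_Ioi
      (h := fun ξ => 10 * ξ ^ (-(5/4) : ℝ))
    · intro ξ hξ
      have hξ16 : (16:ℝ) ≤ ξ := (le_of_lt hξ)
      have hξ0 : (0:ℝ) < ξ := by linarith
      have hI := aI_high hg hξ16
      have hrp : (0:ℝ) < ξ ^ ((5:ℝ)/2) := Real.rpow_pos_of_pos hξ0 _
      have h1 : ξ ^ ((5:ℝ)/4) / Real.sqrt 96 ≤ Real.sqrt (∫ u in (2:ℝ)..ξ, g u) := by
        have h := Real.sqrt_le_sqrt hI
        rwa [Real.sqrt_div hrp.le, Real.sqrt_eq_rpow (ξ ^ ((5:ℝ)/2)),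
          ← Real.rpow_mul hξ0.le, show ((5:ℝ)/2 * (1/2)) = (5:ℝ)/4 by norm_num] at h
      have hq0 : (0:ℝ) < ξ ^ ((5:ℝ)/4) := Real.rpow_pos_of_pos hξ0 _
      have hs96 : (0:ℝ) < Real.sqrt 96 := Real.sqrt_pos.2 (by norm_num)
      have h2 : (Real.sqrt (∫ u in (2:ℝ)..ξ, g u))⁻¹ ≤ (ξ ^ ((5:ℝ)/4) / Real.sqrt 96)⁻¹ :=
        inv_anti₀ (by positivity) h1
      refine h2.trans ?_
      have h96 : Real.sqrt 96 ≤ 10 := by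
        nlinarith [Real.sq_sqrt (by norm_num : (0:ℝ) ≤ 96), Real.sqrt_nonneg 96]
      have heq : (ξ ^ ((5:ℝ)/4) / Real.sqrt 96)⁻¹ = Real.sqrt 96 * ξ ^ (-(5/4) : ℝ) := by
        rw [Real.rpow_neg hξ0.le]
        field_simp
      rw [heq]
      have : (0:ℝ) ≤ ξ ^ (-(5/4) : ℝ) := (Real.rpow_pos_of_pos hξ0 _).le
      nlinarith
    · exact (integrableOn_Ioi_rpow_of_lt (show (-(5/4) : ℝ) < -1 by norm_num)
        (by norm_num : (0:ℝ) < 16)).const_mul 10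
    · intro ξ hξ
      have hξ0 : (0:ℝ) < ξ := by have := hξ; simp only [mem_Ioi] at this; linarith
      positivity
  simp [P1, P2, ENNReal.add_ne_top]

/-- For `ψ₂(λ) = λ(λ log λ - λ + 1)/(log λ)²` on `(0,1)` and
`g(u) = u(u log u - u + 1)/(log u)²` on `(1,∞)`:
(a) `∫_2^∞ (∫_2^ξ g(u) du)^{-1/2} dξ < ∞`;
(b) `∫_0^{1/2} r^{-2} ψ₂(r) dr < ∞`;
(c) `∫_0^{1/2} r^{-2} |log r| ψ₂(r) dr = ∞`. -/
theorem example_psi_two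
    (ψ₂ g : ℝ → ℝ)
    (hψ₂ : ∀ l : ℝ, 0 < l → l < 1 →
      ψ₂ l = l * (l * Real.log l - l + 1) / (Real.log l) ^ 2)
    (hg : ∀ u : ℝ, 1 < u →
      g u = u * (u * Real.log u - u + 1) / (Real.log u) ^ 2) :
    (∫⁻ ξ in Set.Ici (2 : ℝ),
        ENNReal.ofReal ((Real.sqrt (∫ u in (2 : ℝ)..ξ, g u))⁻¹) ≠ ⊤) ∧
    (∫⁻ r in Set.Ioc (0 : ℝ) (1 / 2), ENNReal.ofReal (ψ₂ r / r ^ 2) ≠ ⊤) ∧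
    (∫⁻ r in Set.Ioc (0 : ℝ) (1 / 2),
        ENNReal.ofReal (|Real.log r| * ψ₂ r / r ^ 2) = ⊤) := by
  exact ⟨parta hg, partb ψ₂ hψ₂, partc ψ₂ hψ₂⟩
end

section
/- Let d > 0, c > 0 and 0 < λ ≤ c. Then lim_{t→∞} e^{(λc - λ²/2) t} ∫_t^∞ (d / √(2π s³)) · exp(-(d - c s)² / (2s)) ds = 0. -/
open MeasureTheory Real Set Filter

/-- Integral of a decaying exponential on `Ioi t`. -/
lemma exp_neg_mul_integral_Ioi {b : ℝ} (hb : 0 < b) (t : ℝ) :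
    ∫ s in Set.Ioi t, Real.exp (-b * s) = Real.exp (-b * t) / b := by
  have hderiv : ∀ x ∈ Set.Ici t,
      HasDerivAt (fun s : ℝ => -Real.exp (-b * s) / b) (Real.exp (-b * x)) x := by
    intro x _
    have h := (((hasDerivAt_id x).const_mul (-b)).exp.neg).div_const b
    simp only [id_eq, mul_one] at h
    exact h.congr_deriv (by field_simp : -(Real.exp (-b * x) * -b) / b = Real.exp (-b * x))
  have hint : IntegrableOn (fun s : ℝ => Real.exp (-b * s)) (Set.Ioi t) :=
    exp_neg_integrableOn_Ioi t hb
  have htend : Tendsto (fun s : ℝ => -Real.exp (-b * s) / b) atTop (nhds 0) := by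
    have h : Tendsto (fun s : ℝ => Real.exp (-b * s)) atTop (nhds 0) :=
      Real.tendsto_exp_atBot.comp (tendsto_id.const_mul_atTop_of_neg (by linarith))
    simpa using (h.neg).div_const b
  rw [MeasureTheory.integral_Ioi_of_hasDerivAt_of_tendsto' hderiv hint htend]
  ring

/-- `Real.sqrt` tends to infinity. -/
lemma sqrt_tendsto_atTop : Tendsto Real.sqrt atTop atTop := by
  rw [tendsto_atTop_atTop]
  intro C
  refine ⟨max (C ^ 2) 0, fun x hx => ?_⟩
  have hx0 : (0 : ℝ) ≤ x := le_trans (le_max_right _ _) hx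
  rcases le_or_gt C 0 with hC | hC
  · exact le_trans hC (Real.sqrt_nonneg x)
  · rw [show C = Real.sqrt (C ^ 2) by rw [Real.sqrt_sq hC.le]]
    exact Real.sqrt_le_sqrt (le_trans (le_max_left _ _) hx)

/-- For `d > 0`, `c > 0` and `0 < λ ≤ c`,
`e^{(λc - λ²/2)t} ∫_t^∞ (d/√(2πs³)) e^{-(d - cs)²/(2s)} ds → 0` as `t → ∞`. -/
theorem first_passage_tail_vanishes
    (d c lam : ℝ) (hd : 0 < d) (hc : 0 < c) (hlam : 0 < lam) (hlamc : lam ≤ c) :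
    Tendsto (fun t : ℝ =>
        Real.exp ((lam * c - lam ^ 2 / 2) * t) *
          ∫ s in Set.Ioi t,
            d / Real.sqrt (2 * Real.pi * s ^ 3) *
              Real.exp (-(d - c * s) ^ 2 / (2 * s)))
      atTop (nhds 0) := by
  set a : ℝ := lam * c - lam ^ 2 / 2 with ha
  set b : ℝ := c ^ 2 / 2 with hb
  have hbpos : 0 < b := by positivity
  have hab : a ≤ b := by
    show lam * c - lam ^ 2 / 2 ≤ c ^ 2 / 2
    nlinarith [sq_nonneg (c - lam)]
  set G : ℝ → ℝ := fun t =>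
    d * Real.exp (d * c) / b / Real.sqrt (2 * Real.pi * t ^ 3) with hG
  have hGto : Tendsto G atTop (nhds 0) := by
    apply Tendsto.div_atTop (tendsto_const_nhds)
    apply sqrt_tendsto_atTop.comp
    exact (tendsto_pow_atTop (by norm_num : (3:ℕ) ≠ 0)).const_mul_atTop
      (by positivity : (0:ℝ) < 2 * Real.pi)
  -- squeeze
  apply tendsto_of_tendsto_of_tendsto_of_le_of_le' tendsto_const_nhds hGto
  · -- 0 ≤ F eventually (always)
    filter_upwards with t
    apply mul_nonneg (Real.exp_pos _).le
    apply MeasureTheory.setIntegral_nonneg measurableSet_Ioi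
    intro s _
    positivity
  · -- F ≤ G eventually
    filter_upwards [eventually_ge_atTop (1 : ℝ)] with t ht
    have ht0 : (0:ℝ) < t := lt_of_lt_of_le one_pos ht
    set K : ℝ := d / Real.sqrt (2 * Real.pi * t ^ 3) * Real.exp (d * c) with hK
    have hKnonneg : 0 ≤ K := by positivity
    have hbound : ∀ s ∈ Set.Ioi t,
        d / Real.sqrt (2 * Real.pi * s ^ 3) * Real.exp (-(d - c * s) ^ 2 / (2 * s))
          ≤ K * Real.exp (-b * s) := by
      intro s hs
      have hst : t < s := hs
      have hs0 : 0 < s := ht0.trans hst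
      have h1 : d / Real.sqrt (2 * Real.pi * s ^ 3) ≤ d / Real.sqrt (2 * Real.pi * t ^ 3) := by
        gcongr
      have h2 : Real.exp (-(d - c * s) ^ 2 / (2 * s)) ≤ Real.exp (d * c) * Real.exp (-b * s) := by
        rw [← Real.exp_add]
        apply Real.exp_le_exp.mpr
        rw [div_le_iff₀ (by positivity : (0:ℝ) < 2 * s)]
        show -(d - c * s) ^ 2 ≤ (d * c + -(c ^ 2 / 2) * s) * (2 * s)
        nlinarith [sq_nonneg d]
      calc d / Real.sqrt (2 * Real.pi * s ^ 3) * Real.exp (-(d - c * s) ^ 2 / (2 * s))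
          ≤ d / Real.sqrt (2 * Real.pi * t ^ 3) * (Real.exp (d * c) * Real.exp (-b * s)) := by
            apply mul_le_mul h1 h2 (Real.exp_pos _).le (by positivity)
        _ = K * Real.exp (-b * s) := by rw [hK]; ring
    have hintK : IntegrableOn (fun s : ℝ => K * Real.exp (-b * s)) (Set.Ioi t) :=
      (exp_neg_integrableOn_Ioi t hbpos).const_mul K
    have hmono : (∫ s in Set.Ioi t,
          d / Real.sqrt (2 * Real.pi * s ^ 3) * Real.exp (-(d - c * s) ^ 2 / (2 * s)))
        ≤ ∫ s in Set.Ioi t, K * Real.exp (-b * s) := by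
      apply MeasureTheory.integral_mono_of_nonneg
      · filter_upwards with s
        positivity
      · exact hintK
      · filter_upwards [MeasureTheory.ae_restrict_mem measurableSet_Ioi] with s hs
        exact hbound s hs
    have hval : (∫ s in Set.Ioi t, K * Real.exp (-b * s)) = K * (Real.exp (-b * t) / b) := by
      rw [MeasureTheory.integral_const_mul, exp_neg_mul_integral_Ioi hbpos]
    have hexp1 : Real.exp (a * t) * Real.exp (-b * t) ≤ 1 := by
      rw [← Real.exp_add]
      rw [show (1:ℝ) = Real.exp 0 by rw [Real.exp_zero]]
      apply Real.exp_le_exp.mpr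
      nlinarith
    calc Real.exp (a * t) *
          ∫ s in Set.Ioi t,
            d / Real.sqrt (2 * Real.pi * s ^ 3) * Real.exp (-(d - c * s) ^ 2 / (2 * s))
        ≤ Real.exp (a * t) * (K * (Real.exp (-b * t) / b)) := by
          rw [← hval]
          exact mul_le_mul_of_nonneg_left hmono (Real.exp_pos _).le
      _ = (K / b) * (Real.exp (a * t) * Real.exp (-b * t)) := by ring
      _ ≤ (K / b) * 1 := by
          apply mul_le_mul_of_nonneg_left hexp1 (by positivity)
      _ = G t := by rw [hG, hK]; ring
end

section
/- Let a ≥ 0, c > 0, and let ψ : [a,∞) → ℝ be continuous with ψ(u) > 0 for u > a. Let f : [a,∞) → ℝ be continuously differentiable with f(a) = 0, f(u) > 0 for u > a, f(u) → ∞ as u → ∞, satisfying the differential equation (1/2) f'(u) f(u) - c f(u) = ψ(u) for all u > a, and suppose that f'(u) converges as u → ∞ either to a finite limit or to ∞. Then ∫_{a+1}^∞ (1/f(ξ)) dξ < ∞ if and only if ∫_{a+1}^∞ (∫_a^ξ ψ(u) du)^{-1/2} dξ < ∞. -/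
open MeasureTheory Real Set Filter

/-- Let `a ≥ 0`, `c > 0`, `ψ` continuous on `[a,∞)` and positive on
`(a,∞)`, and let `f` be continuously differentiable on `[a,∞)` with `f(a) = 0`,
`f > 0` on `(a,∞)`, `f → ∞` at `∞`, satisfying `(1/2) f'(u) f(u) - c f(u) = ψ(u)`
for `u > a`, with `f'` converging (to a finite limit or to `∞`) at `∞`. Then
`∫_{a+1}^∞ 1/f(ξ) dξ < ∞ ↔ ∫_{a+1}^∞ (∫_a^ξ ψ(u) du)^{-1/2} dξ < ∞`. -/
theorem extinction_iff_A3
    (a c : ℝ) (ha : 0 ≤ a) (hc : 0 < c)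
    (ψ f f' : ℝ → ℝ)
    (hψ_cont : ContinuousOn ψ (Set.Ici a))
    (hψ_pos : ∀ u : ℝ, a < u → 0 < ψ u)
    (hf_deriv : ∀ u ∈ Set.Ici a, HasDerivAt f (f' u) u)
    (hf'_cont : ContinuousOn f' (Set.Ici a))
    (hfa : f a = 0)
    (hf_pos : ∀ u : ℝ, a < u → 0 < f u)
    (hf_top : Tendsto f atTop atTop)
    (hODE : ∀ u : ℝ, a < u → (1 / 2) * f' u * f u - c * f u = ψ u)
    (hf'_conv : (∃ L : ℝ, Tendsto f' atTop (nhds L)) ∨ Tendsto f' atTop atTop) :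
    (∫⁻ ξ in Set.Ici (a + 1), ENNReal.ofReal (1 / f ξ) ≠ ⊤) ↔
    (∫⁻ ξ in Set.Ici (a + 1),
        ENNReal.ofReal ((Real.sqrt (∫ u in a..ξ, ψ u))⁻¹) ≠ ⊤) := by
  have hfC : ContinuousOn f (Set.Ici a) := fun u hu =>
    (hf_deriv u hu).continuousAt.continuousWithinAt
  -- ψ a = 0 by continuity
  have hψa : ψ a = 0 := by
    have h1 : Tendsto ψ (nhdsWithin a (Set.Ioi a)) (nhds (ψ a)) :=
      (hψ_cont a Set.self_mem_Ici).tendsto.mono_left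
        (nhdsWithin_mono a Set.Ioi_subset_Ici_self)
    have h2 : Tendsto (fun u => (1 / 2) * f' u * f u - c * f u)
        (nhdsWithin a (Set.Ioi a)) (nhds 0) := by
      have hg : ContinuousWithinAt (fun u => (1 / 2) * f' u * f u - c * f u)
          (Set.Ici a) a := by
        apply ContinuousWithinAt.sub
        · exact (continuousWithinAt_const.mul (hf'_cont a Set.self_mem_Ici)).mul
            (hfC a Set.self_mem_Ici)
        · exact continuousWithinAt_const.mul (hfC a Set.self_mem_Ici)
      have : ((1 : ℝ) / 2) * f' a * f a - c * f a = 0 := by rw [hfa]; ring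
      rw [← this]
      exact hg.tendsto.mono_left (nhdsWithin_mono a Set.Ioi_subset_Ici_self)
    have h3 : Tendsto ψ (nhdsWithin a (Set.Ioi a)) (nhds 0) := by
      apply h2.congr'
      filter_upwards [self_mem_nhdsWithin] with u hu
      exact hODE u hu
    exact tendsto_nhds_unique h1 h3
  -- ODE rearranged, valid on all of [a, ∞)
  have hODE' : ∀ u ∈ Set.Ici a, (1 / 2) * f' u * f u = ψ u + c * f u := by
    intro u hu
    rcases eq_or_lt_of_le (Set.mem_Ici.mp hu) with h | h
    · rw [← h, hfa, hψa]; ring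
    · have := hODE u h; linarith
  -- f nonneg on [a, ∞)
  have hf_nonneg : ∀ u ∈ Set.Ici a, 0 ≤ f u := by
    intro u hu
    rcases eq_or_lt_of_le (Set.mem_Ici.mp hu) with h | h
    · rw [← h, hfa]
    · exact (hf_pos u h).le
  -- interval integrability helpers
  have huIcc : ∀ {x y : ℝ}, a ≤ x → a ≤ y → Set.uIcc x y ⊆ Set.Ici a := by
    intro x y hx hy z hz
    exact le_trans (le_min hx hy) hz.1
  have hIIψ : ∀ {x y : ℝ}, a ≤ x → a ≤ y → IntervalIntegrable ψ volume x y := by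
    intro x y hx hy
    exact (hψ_cont.mono (huIcc hx hy)).intervalIntegrable
  have hIIf : ∀ {x y : ℝ}, a ≤ x → a ≤ y → IntervalIntegrable f volume x y := by
    intro x y hx hy
    exact (hfC.mono (huIcc hx hy)).intervalIntegrable
  -- the key identity
  have key : ∀ ξ, a ≤ ξ →
      f ξ ^ 2 = 4 * (∫ u in a..ξ, ψ u) + 4 * c * ∫ u in a..ξ, f u := by
    intro ξ hξ
    have hsub : Set.uIcc a ξ ⊆ Set.Ici a := huIcc le_rfl hξ
    have hderiv : ∀ u ∈ Set.uIcc a ξ,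
        HasDerivAt (fun x => f x ^ 2 / 4) (ψ u + c * f u) u := by
      intro u hu
      have h := ((hf_deriv u (hsub hu)).pow 2).div_const 4
      have heq : ψ u + c * f u = (↑2 * f u ^ (2 - 1) * f' u) / 4 := by
        rw [← hODE' u (hsub hu)]; simp; ring
      rw [heq]; exact h
    have hint : IntervalIntegrable (fun u => ψ u + c * f u) volume a ξ := by
      exact (hIIψ le_rfl hξ).add ((hIIf le_rfl hξ).const_mul c)
    have h1 := intervalIntegral.integral_eq_sub_of_hasDerivAt hderiv hint
    rw [intervalIntegral.integral_add (hIIψ le_rfl hξ) ((hIIf le_rfl hξ).const_mul c),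
      intervalIntegral.integral_const_mul] at h1
    rw [hfa] at h1
    nlinarith [h1]
  -- positivity and monotonicity of Ψ
  have hΨmono : ∀ ξ₁ ξ₂, a ≤ ξ₁ → ξ₁ ≤ ξ₂ →
      (∫ u in a..ξ₁, ψ u) ≤ ∫ u in a..ξ₂, ψ u := by
    intro ξ₁ ξ₂ h1 h2
    have hadd := intervalIntegral.integral_add_adjacent_intervals
      (hIIψ le_rfl h1) (hIIψ h1 (le_trans h1 h2))
    have hnn : 0 ≤ ∫ u in ξ₁..ξ₂, ψ u := by
      apply intervalIntegral.integral_nonneg h2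
      intro u hu
      rcases eq_or_lt_of_le (le_trans h1 hu.1) with h | h
      · rw [← h, hψa]
      · exact (hψ_pos u h).le
    linarith
  have hΨone : 0 < ∫ u in a..(a + 1), ψ u := by
    apply intervalIntegral.intervalIntegral_pos_of_pos_on (hIIψ le_rfl (by linarith))
    · intro x hx; exact hψ_pos x hx.1
    · linarith
  have hΨpos : ∀ ξ, a + 1 ≤ ξ → 0 < ∫ u in a..ξ, ψ u :=
    fun ξ hξ => lt_of_lt_of_le hΨone (hΨmono (a + 1) ξ (by linarith) hξ)
  have hF_nonneg : ∀ ξ, a ≤ ξ → 0 ≤ ∫ u in a..ξ, f u := by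
    intro ξ hξ
    apply intervalIntegral.integral_nonneg hξ
    intro u hu; exact hf_nonneg u hu.1
  -- Ψ ≤ f²/4
  have hΨle : ∀ ξ, a ≤ ξ → 4 * (∫ u in a..ξ, ψ u) ≤ f ξ ^ 2 := by
    intro ξ hξ
    have := key ξ hξ
    have := hF_nonneg ξ hξ
    nlinarith
  constructor
  · -- hard direction
    intro hL
    have hfC1 : ContinuousOn (fun ξ => 1 / f ξ) (Set.Ici (a + 1)) := by
      apply ContinuousOn.div continuousOn_const
        (hfC.mono (Set.Ici_subset_Ici.2 (by linarith)))
      intro ξ hξ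
      exact (hf_pos ξ (by linarith [hξ.out])).ne'
    have hmeas : AEStronglyMeasurable (fun ξ => 1 / f ξ)
        (volume.restrict (Set.Ici (a + 1))) :=
      hfC1.aestronglyMeasurable measurableSet_Ici
    have hnn_ae : 0 ≤ᵐ[volume.restrict (Set.Ici (a + 1))] fun ξ => 1 / f ξ := by
      filter_upwards [ae_restrict_mem measurableSet_Ici] with ξ hξ
      exact (one_div_pos.2 (hf_pos ξ (by linarith [hξ.out]))).le
    have hint : IntegrableOn (fun ξ => 1 / f ξ) (Set.Ici (a + 1)) :=
      (lintegral_ofReal_ne_top_iff_integrable hmeas hnn_ae).1 hL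
    have hintIoi : IntegrableOn (fun ξ => 1 / f ξ) (Set.Ioi (a + 1)) :=
      hint.mono_set Set.Ioi_subset_Ici_self
    set I := ∫ ξ in Set.Ioi (a + 1), 1 / f ξ with hI
    have htend := MeasureTheory.intervalIntegral_tendsto_integral_Ioi
      (a + 1) hintIoi tendsto_id
    have hev : ∀ᶠ b in atTop, I - 1 / (16 * c) < ∫ ξ in (a + 1)..b, 1 / f ξ := by
      apply htend.eventually (eventually_gt_nhds ?_)
      have : 0 < 1 / (16 * c) := by positivity
      linarith
    obtain ⟨b, hbI, hbge⟩ := (hev.and (eventually_ge_atTop (a + 1))).exists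
    have hII1f : ∀ {x y : ℝ}, a + 1 ≤ x → a + 1 ≤ y →
        IntervalIntegrable (fun u => 1 / f u) volume x y := by
      intro x y hx hy
      apply (hfC1.mono ?_).intervalIntegrable
      intro z hz; exact le_trans (le_min hx hy) hz.1
    have hnn_ae' : 0 ≤ᵐ[volume.restrict (Set.Ioi (a + 1))] fun ξ => 1 / f ξ :=
      ae_restrict_of_ae_restrict_of_subset Set.Ioi_subset_Ici_self hnn_ae
    have hIle : ∀ ξ, a + 1 ≤ ξ → (∫ u in (a + 1)..ξ, 1 / f u) ≤ I := by
      intro ξ hξ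
      rw [intervalIntegral.integral_of_le hξ, hI]
      exact setIntegral_mono_set hintIoi hnn_ae'
        (HasSubset.Subset.eventuallyLE Set.Ioc_subset_Ioi_self)
    have htail : ∀ ξ, b ≤ ξ → (∫ u in b..ξ, 1 / f u) ≤ 1 / (16 * c) := by
      intro ξ hξ
      have hadd := intervalIntegral.integral_add_adjacent_intervals
        (hII1f le_rfl hbge) (hII1f hbge (le_trans hbge hξ))
      have := hIle ξ (le_trans hbge hξ)
      linarith
    have hmono : MonotoneOn f (Set.Ici a) := by
      have hsm : StrictMonoOn f (Set.Ici a) := by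
        apply strictMonoOn_of_deriv_pos (convex_Ici a) hfC
        intro u hu
        rw [interior_Ici] at hu
        rw [(hf_deriv u (Set.mem_Ici.mpr (le_of_lt hu))).deriv]
        have hψu := hψ_pos u hu
        have hfu := hf_pos u hu
        have hOu := hODE u hu
        nlinarith
      exact hsm.monotoneOn
    have hFb : ∀ ξ, b ≤ ξ →
        (∫ u in a..ξ, f u) ≤ (∫ u in a..b, f u) + f ξ ^ 2 * (1 / (16 * c)) := by
      intro ξ hξ
      have hab : a ≤ b := by linarith
      have haξ : a ≤ ξ := le_trans hab hξ
      have hadd := intervalIntegral.integral_add_adjacent_intervals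
        (hIIf le_rfl hab) (hIIf hab haξ)
      have hmid : (∫ u in b..ξ, f u) ≤ ∫ u in b..ξ, f ξ ^ 2 * (1 / f u) := by
        apply intervalIntegral.integral_mono_on hξ (hIIf hab haξ)
          ((hII1f hbge (by linarith)).const_mul _)
        intro u hu
        have hu1 : a < u := by linarith [hu.1]
        have hfu : 0 < f u := hf_pos u hu1
        have hle : f u ≤ f ξ := hmono (le_of_lt hu1) haξ hu.2
        rw [mul_one_div, le_div_iff₀ hfu]
        nlinarith
      rw [intervalIntegral.integral_const_mul] at hmid
      have ht := htail ξ hξ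
      have h2 : f ξ ^ 2 * (∫ u in b..ξ, 1 / f u) ≤ f ξ ^ 2 * (1 / (16 * c)) :=
        mul_le_mul_of_nonneg_left ht (sq_nonneg _)
      linarith
    obtain ⟨B, hB⟩ := eventually_atTop.1
      ((hf_top.eventually_ge_atTop
        (Real.sqrt (16 * c * (∫ u in a..b, f u)))).and
        (eventually_ge_atTop (max b (a + 1))))
    have hbB : b ≤ B := le_trans (le_max_left _ _) (hB B le_rfl).2
    have ha1B : a + 1 ≤ B := le_trans (le_max_right _ _) (hB B le_rfl).2
    have hptB : ∀ ξ, B ≤ ξ →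
        (Real.sqrt (∫ u in a..ξ, ψ u))⁻¹ ≤ 4 * (1 / f ξ) := by
      intro ξ hξ
      obtain ⟨h1, _⟩ := hB ξ hξ
      have hbξ : b ≤ ξ := le_trans hbB hξ
      have haξ : a ≤ ξ := by linarith
      have hfξ : 0 < f ξ := hf_pos ξ (by linarith)
      have hFbnn : 0 ≤ ∫ u in a..b, f u := hF_nonneg b (by linarith)
      have hsq : 16 * c * (∫ u in a..b, f u) ≤ f ξ ^ 2 := by
        nlinarith [Real.sq_sqrt (by positivity : (0:ℝ) ≤ 16 * c * (∫ u in a..b, f u)),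
          Real.sqrt_nonneg (16 * c * (∫ u in a..b, f u))]
      have hF := hFb ξ hbξ
      have hΨ : f ξ ^ 2 / 16 ≤ ∫ u in a..ξ, ψ u := by
        have hk := key ξ haξ
        have hcF : c * (∫ u in a..ξ, f u) ≤
            c * (∫ u in a..b, f u) + f ξ ^ 2 / 16 := by
          have h := mul_le_mul_of_nonneg_left hF (le_of_lt hc)
          have h2 : c * (f ξ ^ 2 * (1 / (16 * c))) = f ξ ^ 2 / 16 := by
            field_simp
          calc c * (∫ u in a..ξ, f u) ≤
                c * ((∫ u in a..b, f u) + f ξ ^ 2 * (1 / (16 * c))) := h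
            _ = c * (∫ u in a..b, f u) + c * (f ξ ^ 2 * (1 / (16 * c))) := by
                ring
            _ = c * (∫ u in a..b, f u) + f ξ ^ 2 / 16 := by rw [h2]
        linarith [sq_nonneg (f ξ)]
      have hsqrt : f ξ / 4 ≤ Real.sqrt (∫ u in a..ξ, ψ u) := by
        have heq4 : Real.sqrt (f ξ ^ 2 / 16) = f ξ / 4 := by
          rw [show f ξ ^ 2 / 16 = (f ξ / 4) ^ 2 by ring,
            Real.sqrt_sq (by positivity)]
        calc f ξ / 4 = Real.sqrt (f ξ ^ 2 / 16) := heq4.symm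
          _ ≤ _ := Real.sqrt_le_sqrt hΨ
      rw [mul_one_div]
      calc (Real.sqrt (∫ u in a..ξ, ψ u))⁻¹ ≤ (f ξ / 4)⁻¹ :=
            inv_anti₀ (by positivity) hsqrt
        _ = 4 / f ξ := by rw [inv_div]
    have hsplit : Set.Ici (a + 1) ⊆ Set.Icc (a + 1) B ∪ Set.Ici B := by
      intro x hx
      rcases le_total x B with h | h
      · exact Or.inl ⟨hx, h⟩
      · exact Or.inr h
    have hbound : (∫⁻ ξ in Set.Ici (a + 1),
        ENNReal.ofReal ((Real.sqrt (∫ u in a..ξ, ψ u))⁻¹)) ≤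
        (∫⁻ ξ in Set.Icc (a + 1) B,
          ENNReal.ofReal ((Real.sqrt (∫ u in a..ξ, ψ u))⁻¹)) +
        ∫⁻ ξ in Set.Ici B, ENNReal.ofReal ((Real.sqrt (∫ u in a..ξ, ψ u))⁻¹) :=
      le_trans (lintegral_mono_set hsplit) (lintegral_union_le _ _ _)
    have hpart1 : (∫⁻ ξ in Set.Icc (a + 1) B,
        ENNReal.ofReal ((Real.sqrt (∫ u in a..ξ, ψ u))⁻¹)) ≠ ⊤ := by
      have hle : (∫⁻ ξ in Set.Icc (a + 1) B,
          ENNReal.ofReal ((Real.sqrt (∫ u in a..ξ, ψ u))⁻¹)) ≤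
          ∫⁻ _ in Set.Icc (a + 1) B,
          ENNReal.ofReal ((Real.sqrt (∫ u in a..(a + 1), ψ u))⁻¹) := by
        apply lintegral_mono_ae
        rw [ae_restrict_iff' measurableSet_Icc]
        filter_upwards with ξ hξ
        apply ENNReal.ofReal_le_ofReal
        apply inv_anti₀ (Real.sqrt_pos.2 hΨone)
        exact Real.sqrt_le_sqrt (hΨmono (a + 1) ξ (by linarith) hξ.1)
      apply ne_top_of_le_ne_top _ hle
      rw [setLIntegral_const]
      exact ENNReal.mul_ne_top ENNReal.ofReal_ne_top
        (by rw [Real.volume_Icc]; exact ENNReal.ofReal_ne_top)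
    have hpart2 : (∫⁻ ξ in Set.Ici B,
        ENNReal.ofReal ((Real.sqrt (∫ u in a..ξ, ψ u))⁻¹)) ≠ ⊤ := by
      have hle : (∫⁻ ξ in Set.Ici B,
          ENNReal.ofReal ((Real.sqrt (∫ u in a..ξ, ψ u))⁻¹)) ≤
          ∫⁻ ξ in Set.Ici B, ENNReal.ofReal (4 * (1 / f ξ)) := by
        apply lintegral_mono_ae
        rw [ae_restrict_iff' measurableSet_Ici]
        filter_upwards with ξ hξ
        exact ENNReal.ofReal_le_ofReal (hptB ξ hξ)
      have heq : (∫⁻ ξ in Set.Ici B, ENNReal.ofReal (4 * (1 / f ξ))) =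
          ENNReal.ofReal 4 * ∫⁻ ξ in Set.Ici B, ENNReal.ofReal (1 / f ξ) := by
        rw [← lintegral_const_mul' (ENNReal.ofReal 4) _ ENNReal.ofReal_ne_top]
        apply lintegral_congr
        intro ξ
        rw [ENNReal.ofReal_mul (by norm_num : (0:ℝ) ≤ 4)]
      have hrest : (∫⁻ ξ in Set.Ici B, ENNReal.ofReal (1 / f ξ)) ≤
          ∫⁻ ξ in Set.Ici (a + 1), ENNReal.ofReal (1 / f ξ) :=
        lintegral_mono_set (Set.Ici_subset_Ici.2 ha1B)
      apply ne_top_of_le_ne_top _ hle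
      rw [heq]
      exact ENNReal.mul_ne_top ENNReal.ofReal_ne_top
        (ne_top_of_le_ne_top hL hrest)
    exact ne_top_of_le_ne_top (ENNReal.add_ne_top.2 ⟨hpart1, hpart2⟩) hbound
  · -- easy direction: 1/f ≤ (√Ψ)⁻¹ pointwise
    intro hR
    refine ne_top_of_le_ne_top hR (lintegral_mono_ae ?_)
    rw [ae_restrict_iff' measurableSet_Ici]
    filter_upwards with ξ hξ
    apply ENNReal.ofReal_le_ofReal
    have haξ : a < ξ := by linarith [hξ.out]
    have hfξ : 0 < f ξ := hf_pos ξ haξ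
    have hsq : Real.sqrt (∫ u in a..ξ, ψ u) ≤ f ξ := by
      have h1 : (∫ u in a..ξ, ψ u) ≤ f ξ ^ 2 := by
        have := hΨle ξ haξ.le
        have := hΨpos ξ hξ.out
        linarith
      calc Real.sqrt (∫ u in a..ξ, ψ u) ≤ Real.sqrt (f ξ ^ 2) :=
            Real.sqrt_le_sqrt h1
        _ = f ξ := Real.sqrt_sq hfξ.le
    have hsqpos : 0 < Real.sqrt (∫ u in a..ξ, ψ u) :=
      Real.sqrt_pos.2 (hΨpos ξ hξ.out)
    rw [one_div]
    exact inv_anti₀ hsqpos hsq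
end

section
/- Let ψ be a branching mechanism with parameters α > 0, β = 0 and Lévy measure ν, assume additionally ∫_{(0,∞)} (x ∧ 1) ν(dx) < ∞ (so that ψ corresponds to a spectrally positive Lévy process of bounded variation), assume ψ(λ) → ∞ as λ → ∞, and let λ* > 0 be the unique positive root of ψ. Then ∫_{λ*+1}^∞ (∫_{λ*}^ξ ψ(u) du)^{-1/2} dξ = ∞; that is, condition (A3) fails. -/
open MeasureTheory Real Set Filter

/-- For a branching mechanism with `β = 0` and
`∫ (x ∧ 1) ν(dx) < ∞` (bounded variation spectrally positive case), with
`ψ(λ) → ∞` and unique positive root `λ*`, condition (A3) fails: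
`∫_{λ*+1}^∞ (∫_{λ*}^ξ ψ(u) du)^{-1/2} dξ = ∞`. -/
theorem A3_fails_for_bounded_variation
    (α : ℝ) (hα : 0 < α)
    (ν : Measure ℝ) (hν0 : ν (Set.Iic 0) = 0)
    (hν : ∫⁻ x, ENNReal.ofReal (min x (x ^ 2)) ∂ν ≠ ⊤)
    (hνBV : ∫⁻ x, ENNReal.ofReal (min x 1) ∂ν ≠ ⊤)
    (ψ : ℝ → ℝ)
    (hψ : ∀ l : ℝ, ψ l = -α * l + ∫ x, (Real.exp (-l * x) - 1 + l * x) ∂ν)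
    (hψ_top : Tendsto ψ atTop atTop)
    (lstar : ℝ) (hlstar_pos : 0 < lstar) (hlstar_root : ψ lstar = 0)
    (hlstar_unique : ∀ l : ℝ, lstar < l → 0 < ψ l) :
    ∫⁻ ξ in Set.Ici (lstar + 1),
        ENNReal.ofReal ((Real.sqrt (∫ u in lstar..ξ, ψ u))⁻¹) = ⊤ := by
  -- ν is concentrated on (0,∞)
  have hae : ∀ᵐ x ∂ν, 0 < x := by
    rw [ae_iff]
    convert hν0 using 2
    ext x
    simp [not_lt]
  set g : ℝ → ℝ → ℝ := fun l x => Real.exp (-l * x) - 1 + l * x with hgdef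
  -- pointwise bounds on g
  have hg0 : ∀ l x, 0 ≤ g l x := by
    intro l x
    have := Real.add_one_le_exp (-l * x)
    simp only [hgdef]
    nlinarith
  have hgle : ∀ l x : ℝ, 0 ≤ l → 0 ≤ x → g l x ≤ l * x := by
    intro l x hl hx
    have h1 : Real.exp (-l * x) ≤ 1 := Real.exp_le_one_iff.mpr (by nlinarith)
    simp only [hgdef]
    linarith
  have hgsq : ∀ l x : ℝ, 0 ≤ l → 0 ≤ x → l * x ≤ 1 → g l x ≤ (l * x) ^ 2 := by
    intro l x hl hx h1
    have habs : |(-(l * x))| ≤ 1 := by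
      rw [abs_neg, abs_of_nonneg (by positivity)]
      exact h1
    have h := (abs_le.mp (Real.abs_exp_sub_one_sub_id_le habs)).2
    simp only [neg_sq] at h
    simp only [hgdef, neg_mul]
    linarith
  have key : ∀ L l x : ℝ, 0 ≤ l → l ≤ L → 0 < x →
      g l x ≤ (L ^ 2 + L) * min x (x ^ 2) := by
    intro L l x hl hlL hx
    have hL : 0 ≤ L := hl.trans hlL
    rcases le_total x 1 with hx1 | hx1
    · have hmin : min x (x ^ 2) = x ^ 2 := min_eq_right (by nlinarith)
      rw [hmin]
      have h3 : (l * x) ^ 2 ≤ L ^ 2 * x ^ 2 := by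
        nlinarith [mul_nonneg (mul_nonneg (sub_nonneg.2 hlL)
          (by linarith : (0:ℝ) ≤ L + l)) (sq_nonneg x)]
      rcases le_total (l * x) 1 with hlx | hlx
      · have h := hgsq l x hl hx.le hlx
        nlinarith [mul_nonneg hL (sq_nonneg x)]
      · have h := hgle l x hl hx.le
        have h2 : l * x ≤ (l * x) ^ 2 := by nlinarith
        nlinarith [mul_nonneg hL (sq_nonneg x)]
    · have hmin : min x (x ^ 2) = x := min_eq_left (by nlinarith)
      rw [hmin]
      have h := hgle l x hl hx.le
      have h4 : l * x ≤ L * x := mul_le_mul_of_nonneg_right hlL hx.le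
      nlinarith [mul_nonneg (sq_nonneg L) hx.le]
  -- integrability facts
  have hInt_min : Integrable (fun x : ℝ => min x (x ^ 2)) ν := by
    refine ⟨(measurable_id.min (measurable_id.pow_const 2)).aestronglyMeasurable, ?_⟩
    rw [hasFiniteIntegral_iff_ofReal]
    · exact hν.lt_top
    · filter_upwards [hae] with x hx
      exact le_min hx.le (by positivity)
  have hInt_min1 : Integrable (fun x : ℝ => min x 1) ν := by
    refine ⟨(measurable_id.min measurable_const).aestronglyMeasurable, ?_⟩
    rw [hasFiniteIntegral_iff_ofReal]
    · exact hνBV.lt_top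
    · filter_upwards [hae] with x hx
      exact le_min hx.le zero_le_one
  have hInt_id : Integrable (fun x : ℝ => x) ν := by
    have hIntF : Integrable (fun x : ℝ => min x 1 + min x (x ^ 2)) ν := hInt_min1.add hInt_min
    refine hIntF.mono measurable_id.aestronglyMeasurable ?_
    filter_upwards [hae] with x hx
    have h1 : 0 ≤ min x 1 := le_min hx.le zero_le_one
    have h2 : 0 ≤ min x (x ^ 2) := le_min hx.le (by positivity)
    rw [Real.norm_eq_abs, Real.norm_eq_abs, abs_of_nonneg hx.le, abs_of_nonneg (by linarith)]
    rcases le_total x 1 with h | h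
    · linarith [min_eq_left h, h2]
    · have h3 : min x (x ^ 2) = x := min_eq_left (by nlinarith)
      linarith [h1, h3]
  have hInt_g : ∀ l : ℝ, 0 ≤ l → Integrable (g l) ν := by
    intro l hl
    refine (hInt_min.const_mul (l ^ 2 + l)).mono ?_ ?_
    · exact (((Real.continuous_exp.comp (continuous_const.mul continuous_id)).sub
        continuous_const).add (continuous_const.mul continuous_id)).aestronglyMeasurable
    · filter_upwards [hae] with x hx
      rw [Real.norm_eq_abs, abs_of_nonneg (hg0 l x)]
      have h1 := key l l x hl le_rfl hx
      calc g l x ≤ (l ^ 2 + l) * min x (x ^ 2) := h1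
        _ ≤ |(l ^ 2 + l) * min x (x ^ 2)| := le_abs_self _
        _ = ‖(l ^ 2 + l) * min x (x ^ 2)‖ := (Real.norm_eq_abs _).symm
  set M : ℝ := ∫ x, x ∂ν with hMdef
  have hM0 : 0 ≤ M := integral_nonneg_of_ae (hae.mono fun x h => h.le)
  have hψ_le : ∀ l : ℝ, 0 ≤ l → ψ l ≤ -α * l + M * l := by
    intro l hl
    rw [hψ l]
    have h1 : ∫ x, g l x ∂ν ≤ ∫ x, l * x ∂ν := by
      refine integral_mono_ae (hInt_g l hl) (hInt_id.const_mul l) ?_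
      filter_upwards [hae] with x hx using hgle l x hl hx.le
    have h2 : ∫ x, l * x ∂ν = l * M := by
      rw [hMdef, MeasureTheory.integral_const_mul]
    simp only [hgdef] at h1
    rw [h2] at h1
    linarith [h1]
  have hMα : α ≤ M := by
    have h := hψ_le lstar hlstar_pos.le
    rw [hlstar_root] at h
    nlinarith
  -- continuity of ψ on (0,∞)
  have hcont : ∀ l₀ : ℝ, 0 < l₀ → ContinuousAt ψ l₀ := by
    intro l₀ h0
    have hψeq : ψ = fun l => -α * l + ∫ x, g l x ∂ν := funext hψ
    rw [hψeq]
    refine ContinuousAt.add ((continuous_const.mul continuous_id).continuousAt) ?_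
    refine continuousAt_of_dominated (bound := fun x =>
        ((l₀ + 1) ^ 2 + (l₀ + 1)) * min x (x ^ 2)) ?_ ?_ (hInt_min.const_mul _) ?_
    · filter_upwards with l
      exact (((Real.continuous_exp.comp (continuous_const.mul continuous_id)).sub
        continuous_const).add (continuous_const.mul continuous_id)).aestronglyMeasurable
    · filter_upwards [Ioo_mem_nhds h0 (lt_add_one l₀)] with l hl
      filter_upwards [hae] with x hx
      rw [Real.norm_eq_abs, abs_of_nonneg (hg0 l x)]
      exact key (l₀ + 1) l x hl.1.le hl.2.le hx
    · filter_upwards with x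
      exact (((Real.continuous_exp.comp (continuous_id.neg.mul continuous_const)).sub
        continuous_const).add (continuous_id.mul continuous_const)).continuousAt
  have hψcont : ContinuousOn ψ (Ici lstar) :=
    fun l hl => ((hcont l (hlstar_pos.trans_le hl)).continuousWithinAt)
  -- pointwise lower bound on the integrand
  have hbound : ∀ ξ ∈ Ici (lstar + 1),
      ENNReal.ofReal ((Real.sqrt M)⁻¹ * ξ⁻¹)
        ≤ ENNReal.ofReal ((Real.sqrt (∫ u in lstar..ξ, ψ u))⁻¹) := by
    intro ξ hξ
    have hξ1 : lstar + 1 ≤ ξ := hξ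
    have hlξ : lstar < ξ := by linarith
    have hξpos : 0 < ξ := by linarith
    have hii : IntervalIntegrable ψ volume lstar ξ := by
      refine (hψcont.mono ?_).intervalIntegrable
      rw [uIcc_of_le hlξ.le]
      exact Icc_subset_Ici_self
    have hIpos : 0 < ∫ u in lstar..ξ, ψ u :=
      intervalIntegral.intervalIntegral_pos_of_pos_on hii
        (fun u hu => hlstar_unique u hu.1) hlξ
    have hIle : (∫ u in lstar..ξ, ψ u) ≤ M * ξ ^ 2 := by
      have h1 : (∫ u in lstar..ξ, ψ u) ≤ ∫ u in lstar..ξ, M * u := by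
        refine intervalIntegral.integral_mono_on hlξ.le hii
          ((continuous_const.mul continuous_id).intervalIntegrable _ _) ?_
        intro u hu
        have hu0 : 0 < u := hlstar_pos.trans_le hu.1
        have h := hψ_le u hu0.le
        nlinarith
      have h2 : (∫ u in lstar..ξ, M * u) = M * ((ξ ^ 2 - lstar ^ 2) / 2) := by
        rw [intervalIntegral.integral_const_mul, integral_id]
      rw [h2] at h1
      nlinarith [sq_nonneg lstar, sq_nonneg ξ]
    have hsqrt : Real.sqrt (∫ u in lstar..ξ, ψ u) ≤ Real.sqrt M * ξ := by
      calc Real.sqrt (∫ u in lstar..ξ, ψ u) ≤ Real.sqrt (M * ξ ^ 2) :=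
            Real.sqrt_le_sqrt hIle
        _ = Real.sqrt M * ξ := by rw [Real.sqrt_mul hM0, Real.sqrt_sq hξpos.le]
    refine ENNReal.ofReal_le_ofReal ?_
    rw [← mul_inv]
    exact inv_anti₀ (Real.sqrt_pos.mpr hIpos) hsqrt
  have hMpos : 0 < Real.sqrt M := Real.sqrt_pos.mpr (hα.trans_le hMα)
  -- the comparison integral diverges
  have hlow : ∫⁻ ξ in Ici (lstar + 1), ENNReal.ofReal ((Real.sqrt M)⁻¹ * ξ⁻¹) = ⊤ := by
    by_contra h
    have hInt1 : IntegrableOn (fun ξ : ℝ => (Real.sqrt M)⁻¹ * ξ⁻¹) (Ici (lstar + 1)) := by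
      refine ⟨(measurable_inv.const_mul _).aestronglyMeasurable, ?_⟩
      rw [hasFiniteIntegral_iff_ofReal]
      · exact Ne.lt_top h
      · filter_upwards [ae_restrict_mem measurableSet_Ici] with ξ hξ
        have hξpos : 0 < ξ := by
          have : lstar + 1 ≤ ξ := hξ
          linarith
        positivity
    have hInt2 : IntegrableOn (fun ξ : ℝ => ξ⁻¹) (Ioi (lstar + 1)) := by
      have h3 := ((hInt1.mono_set Ioi_subset_Ici_self).const_mul (Real.sqrt M))
      refine h3.congr ?_
      filter_upwards with ξ
      rw [← mul_assoc, mul_inv_cancel₀ hMpos.ne', one_mul]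
    exact not_IntegrableOn_Ioi_inv hInt2
  rw [eq_top_iff]
  calc (⊤ : ENNReal) = ∫⁻ ξ in Ici (lstar + 1), ENNReal.ofReal ((Real.sqrt M)⁻¹ * ξ⁻¹) :=
        hlow.symm
    _ ≤ _ := lintegral_mono_ae ((ae_restrict_mem measurableSet_Ici).mono hbound)
end
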